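/- arXiv:2506.01509 — 7 statements merged into one kernel-verified Lean document; each statement's English description precedes it below -/
import Mathlib

section
/- If S ⊆ V is a vertex cover of G (i.e., every edge of G has at least one endpoint in S), then every core element y ∈ core(G_0[Π(S)]) of the induced subgraph G_0[Π(S)] satisfies y_α = 0; hence min_{y ∈ core(G_0[Π(S)])}(1 − y_α) = 1. -/
/-- A finite graph: a finite vertex set and a finite set of (oriented representatives of) edges. -/
structure FinGraph (α : Type*) where
  verts : Finset α
  edges : Finset (α × α)

namespace FinGraph

variable {α : Type*}

/-- A matching: a set of edges of `G` that are pairwise vertex-disjoint. -/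
def IsMatching (G : FinGraph α) (M : Finset (α × α)) : Prop :=
  M ⊆ G.edges ∧ ∀ e ∈ M, ∀ f ∈ M, e ≠ f →
    e.1 ≠ f.1 ∧ e.1 ≠ f.2 ∧ e.2 ≠ f.1 ∧ e.2 ≠ f.2

open Classical in
/-- `ν(G)`: the maximum cardinality of a matching of `G`. -/
noncomputable def nu (G : FinGraph α) : ℕ :=
  (G.edges.powerset.filter fun M => G.IsMatching M).sup Finset.card

/-- Well-formedness: edges join two distinct vertices of the graph. -/
def WF (G : FinGraph α) : Prop :=
  ∀ e ∈ G.edges, e.1 ∈ G.verts ∧ e.2 ∈ G.verts ∧ e.1 ≠ e.2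

/-- `G` is bipartite with parts `V1`, `V2` (edges oriented from `V1` to `V2`). -/
def Bipartition [DecidableEq α] (G : FinGraph α) (V1 V2 : Finset α) : Prop :=
  G.verts ⊆ V1 ∪ V2 ∧ ∀ e ∈ G.edges, e.1 ∈ V1 ∧ e.2 ∈ V2

/-- The core of the assignment game on `G`: minimum fractional vertex covers of value `ν(G)`. -/
noncomputable def core (G : FinGraph α) : Set (α → ℝ) :=
  {y | (∀ v ∈ G.verts, 0 ≤ y v) ∧ (∀ e ∈ G.edges, 1 ≤ y e.1 + y e.2) ∧
    ∑ v ∈ G.verts, y v = (G.nu : ℝ)}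

/-- The subgraph of `G` induced by the vertex set `U`. -/
def induce [DecidableEq α] (G : FinGraph α) (U : Finset α) : FinGraph α :=
  ⟨G.verts ∩ U, G.edges.filter fun e => e.1 ∈ U ∧ e.2 ∈ U⟩

end FinGraph

/-- A real number is integral if it is an integer. -/
def IntegralReal (x : ℝ) : Prop := ∃ n : ℤ, x = (n : ℝ)

open FinGraph

variable {V : Type*} [Fintype V] [DecidableEq V]

/-- The degree of `v`: the number of edges of `E` containing `v`. -/
def degE (E : Finset (Sym2 V)) (v : V) : ℕ := (E.filter fun e => v ∈ e).card

/-- The vertex universe of the hardness-reduction graph: copies `(v, j)` of original vertices,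
edge-vertices, and three extra vertices `α = redAlpha`, `β₁ = redBeta1`, `β₂ = redBeta2`. -/
abbrev RedVert (V : Type*) : Type _ := (V × ℕ) ⊕ (Sym2 V ⊕ Fin 3)

/-- The copy-vertex `v_j`. -/
def redCopy (v : V) (j : ℕ) : RedVert V := Sum.inl (v, j)

/-- The edge-vertex corresponding to `e`. -/
def redEdgeVert (e : Sym2 V) : RedVert V := Sum.inr (Sum.inl e)

/-- The special vertex `α`. -/
def redAlpha (V : Type*) : RedVert V := Sum.inr (Sum.inr 0)

/-- The special vertex `β₁`. -/
def redBeta1 (V : Type*) : RedVert V := Sum.inr (Sum.inr 1)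

/-- The special vertex `β₂`. -/
def redBeta2 (V : Type*) : RedVert V := Sum.inr (Sum.inr 2)

/-- The hardness-reduction graph `G₀` built from the graph `G = (V, E)`:
vertices are the copies `v_1, …, v_{d_v}` for `v ∈ V`, the edge-vertices `e ∈ E`, and
`α, β₁, β₂`; edges join each edge-vertex `e` to every copy of each endpoint of `e`, and `α`
to every edge-vertex and to `β₁` and `β₂`. -/
def redGraph (E : Finset (Sym2 V)) : FinGraph (RedVert V) where
  verts :=
    (Finset.univ.biUnion fun v : V =>
        (Finset.range (degE E v)).image fun j => redCopy v j)
      ∪ E.image redEdgeVert ∪ {redAlpha V, redBeta1 V, redBeta2 V}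
  edges :=
    (E.biUnion fun e =>
        (Finset.univ.filter fun v : V => v ∈ e).biUnion fun v =>
          (Finset.range (degE E v)).image fun j => (redEdgeVert e, redCopy v j))
      ∪ E.image (fun e => (redAlpha V, redEdgeVert e))
      ∪ {(redAlpha V, redBeta1 V), (redAlpha V, redBeta2 V)}

/-- `Π(S)`: the copies of the vertices of `S`, all edge-vertices, and `α`. -/
def redPi (E : Finset (Sym2 V)) (S : Finset V) : Finset (RedVert V) :=
  (S.biUnion fun v => (Finset.range (degE E v)).image fun j => redCopy v j)
    ∪ E.image redEdgeVert ∪ {redAlpha V}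

/-- `S` is a vertex cover of `(V, E)`. -/
def IsVCover (E : Finset (Sym2 V)) (S : Finset V) : Prop :=
  ∀ e ∈ E, ∃ v ∈ S, v ∈ e


open Classical in
/-- A choice of a covering vertex for each edge. -/
noncomputable def covV (S : Finset V) (e : Sym2 V) : V :=
  if h : ∃ v ∈ S, v ∈ e then h.choose else (Quot.out e).1

theorem covV_mem {E : Finset (Sym2 V)} {S : Finset V} (hS : IsVCover E S)
    {e : Sym2 V} (he : e ∈ E) : covV S e ∈ S ∧ covV S e ∈ e := by
  have h : ∃ v ∈ S, v ∈ e := hS e he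
  rw [covV, dif_pos h]
  exact ⟨h.choose_spec.1, h.choose_spec.2⟩

open Classical in
/-- A choice of a copy-index for each edge, injective together with `covV`. -/
noncomputable def idxE (E : Finset (Sym2 V)) (S : Finset V) (e : Sym2 V) : ℕ :=
  ((E.filter fun e' => covV S e' = covV S e).toList).idxOf e

theorem idxE_lt {E : Finset (Sym2 V)} {S : Finset V} (hS : IsVCover E S)
    {e : Sym2 V} (he : e ∈ E) : idxE E S e < degE E (covV S e) := by
  classical
  have hmem : e ∈ (E.filter fun e' => covV S e' = covV S e).toList := by
    simp [Finset.mem_toList, Finset.mem_filter, he]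
  have h1 : idxE E S e < (E.filter fun e' => covV S e' = covV S e).toList.length :=
    List.idxOf_lt_length_iff.mpr hmem
  have h2 : (E.filter fun e' => covV S e' = covV S e).card ≤ degE E (covV S e) := by
    apply Finset.card_le_card
    intro e' he'
    simp only [Finset.mem_filter] at he' ⊢
    refine ⟨he'.1, ?_⟩
    have := (covV_mem hS he'.1).2
    rwa [he'.2] at this
  calc idxE E S e < _ := h1
    _ = (E.filter fun e' => covV S e' = covV S e).card := Finset.length_toList _
    _ ≤ _ := h2

theorem covV_idxE_inj {E : Finset (Sym2 V)} {S : Finset V}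
    {e1 e2 : Sym2 V} (h1 : e1 ∈ E) (h2 : e2 ∈ E)
    (hc : covV S e1 = covV S e2) (hi : idxE E S e1 = idxE E S e2) : e1 = e2 := by
  classical
  have hfil : (E.filter fun e' => covV S e' = covV S e1)
      = (E.filter fun e' => covV S e' = covV S e2) := by rw [hc]
  have hm1 : e1 ∈ (E.filter fun e' => covV S e' = covV S e1).toList := by
    simp [Finset.mem_toList, Finset.mem_filter, h1]
  have hm2 : e2 ∈ (E.filter fun e' => covV S e' = covV S e1).toList := by
    simp [Finset.mem_toList, Finset.mem_filter, h2, hc]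
  have : idxE E S e2 = ((E.filter fun e' => covV S e' = covV S e1).toList).idxOf e2 := by
    rw [idxE, hfil]
  exact (List.idxOf_inj (y := e2) hm1).mp (hi.trans this)

/-- The matching edge assigned to `e`. -/
noncomputable def matchF (E : Finset (Sym2 V)) (S : Finset V) (e : Sym2 V) :
    RedVert V × RedVert V :=
  (redEdgeVert e, redCopy (covV S e) (idxE E S e))

theorem redBeta1_not_mem_redPi (E : Finset (Sym2 V)) (S : Finset V) :
    redBeta1 V ∉ redPi E S := by
  simp [redPi, redBeta1, redCopy, redEdgeVert, redAlpha]

theorem redBeta2_not_mem_redPi (E : Finset (Sym2 V)) (S : Finset V) :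
    redBeta2 V ∉ redPi E S := by
  simp [redPi, redBeta2, redCopy, redEdgeVert, redAlpha]

theorem redAlpha_mem_redPi (E : Finset (Sym2 V)) (S : Finset V) :
    redAlpha V ∈ redPi E S := by
  simp [redPi]

theorem redEdgeVert_mem_redPi {E : Finset (Sym2 V)} (S : Finset V)
    {e : Sym2 V} (he : e ∈ E) : redEdgeVert e ∈ redPi E S := by
  simp only [redPi, Finset.mem_union]
  exact Or.inl (Or.inr (Finset.mem_image_of_mem _ he))

theorem redCopy_mem_redPi {E : Finset (Sym2 V)} {S : Finset V}
    {v : V} (hv : v ∈ S) {j : ℕ} (hj : j < degE E v) : redCopy v j ∈ redPi E S := by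
  simp only [redPi, Finset.mem_union]
  refine Or.inl (Or.inl ?_)
  rw [Finset.mem_biUnion]
  exact ⟨v, hv, Finset.mem_image_of_mem _ (Finset.mem_range.mpr hj)⟩

/-- Classification of the edges of the induced graph. -/
theorem induced_edge_cases {E : Finset (Sym2 V)} {S : Finset V}
    {f : RedVert V × RedVert V}
    (hf : f ∈ ((redGraph E).induce (redPi E S)).edges) :
    (∃ e ∈ E, ∃ v : V, v ∈ e ∧ ∃ j : ℕ, f = (redEdgeVert e, redCopy v j)) ∨
    (∃ e ∈ E, f = (redAlpha V, redEdgeVert e)) := by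
  classical
  simp only [induce, Finset.mem_filter] at hf
  obtain ⟨hf0, hf1, hf2⟩ := hf
  simp only [redGraph, Finset.mem_union, Finset.mem_biUnion, Finset.mem_image,
    Finset.mem_filter, Finset.mem_univ, true_and, Finset.mem_insert,
    Finset.mem_singleton, Finset.mem_range] at hf0
  rcases hf0 with ((⟨e, he, v, hv, j, hj, hfe⟩ | ⟨e, he, hfe⟩) | (hfe | hfe))
  · exact Or.inl ⟨e, he, v, hv, j, by rw [← hfe]⟩
  · exact Or.inr ⟨e, he, by rw [← hfe]⟩
  · exfalso; apply redBeta1_not_mem_redPi E S; rw [hfe] at hf2; exact hf2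
  · exfalso; apply redBeta2_not_mem_redPi E S; rw [hfe] at hf2; exact hf2

/-- The extraction map used for the upper bound on matchings. -/
def extractE : RedVert V × RedVert V → Option (Sym2 V)
  | (Sum.inr (Sum.inl e), _) => some e
  | (_, Sum.inr (Sum.inl e)) => some e
  | _ => none

theorem nu_induced_le (E : Finset (Sym2 V)) (S : Finset V) :
    ((redGraph E).induce (redPi E S)).nu ≤ E.card := by
  classical
  apply Finset.sup_le
  intro M hM
  simp only [Finset.mem_filter, Finset.mem_powerset] at hM
  obtain ⟨hsub, _, hdisj⟩ := hM
  have : M.card ≤ (E.image (Option.some)).card := by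
    apply Finset.card_le_card_of_injOn extractE
    · intro f hf
      rcases induced_edge_cases (hsub hf) with ⟨e, he, v, hv, j, hfe⟩ | ⟨e, he, hfe⟩
      · subst hfe
        exact Finset.mem_image_of_mem _ he
      · subst hfe
        exact Finset.mem_image_of_mem _ he
    · intro f1 hf1 f2 hf2 hgeq
      by_contra hne
      have hd := hdisj f1 hf1 f2 hf2 hne
      rcases induced_edge_cases (hsub hf1) with ⟨e1, he1, v1, hv1, j1, hfe1⟩ | ⟨e1, he1, hfe1⟩ <;>
        rcases induced_edge_cases (hsub hf2) with ⟨e2, he2, v2, hv2, j2, hfe2⟩ | ⟨e2, he2, hfe2⟩ <;>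
        subst hfe1 <;> subst hfe2 <;>
        simp only [extractE, redEdgeVert, redCopy, redAlpha, Option.some.injEq] at hgeq <;>
        subst hgeq <;> simp [redEdgeVert, redCopy, redAlpha] at hd
  calc M.card ≤ _ := this
    _ = E.card := Finset.card_image_of_injective _ (Option.some_injective _)

theorem matchF_mem_induced_edges {E : Finset (Sym2 V)} {S : Finset V} (hS : IsVCover E S)
    {e : Sym2 V} (he : e ∈ E) :
    matchF E S e ∈ ((redGraph E).induce (redPi E S)).edges := by
  classical
  simp only [induce, Finset.mem_filter]
  refine ⟨?_, ?_, ?_⟩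
  · simp only [redGraph, Finset.mem_union]
    refine Or.inl (Or.inl ?_)
    rw [Finset.mem_biUnion]
    refine ⟨e, he, ?_⟩
    rw [Finset.mem_biUnion]
    refine ⟨covV S e, by simp [(covV_mem hS he).2], ?_⟩
    exact Finset.mem_image_of_mem _ (Finset.mem_range.mpr (idxE_lt hS he))
  · exact redEdgeVert_mem_redPi S he
  · exact redCopy_mem_redPi (covV_mem hS he).1 (idxE_lt hS he)

theorem nu_induced_eq {E : Finset (Sym2 V)} {S : Finset V} (hS : IsVCover E S) :
    ((redGraph E).induce (redPi E S)).nu = E.card := by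
  classical
  refine le_antisymm (nu_induced_le E S) ?_
  have hinjF : Set.InjOn (matchF E S) E := by
    intro e1 he1 e2 he2 hF
    have := congrArg Prod.fst hF
    simpa [matchF, redEdgeVert] using this
  have hmem : E.image (matchF E S) ∈
      ((((redGraph E).induce (redPi E S)).edges.powerset).filter
        fun M => ((redGraph E).induce (redPi E S)).IsMatching M) := by
    have hsub : E.image (matchF E S) ⊆ ((redGraph E).induce (redPi E S)).edges := by
      intro f hf
      obtain ⟨e, he, rfl⟩ := Finset.mem_image.mp hf
      exact matchF_mem_induced_edges hS he
    simp only [Finset.mem_filter, Finset.mem_powerset]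
    refine ⟨hsub, hsub, ?_⟩
    intro f1 hf1 f2 hf2 hne
    obtain ⟨e1, he1, rfl⟩ := Finset.mem_image.mp hf1
    obtain ⟨e2, he2, rfl⟩ := Finset.mem_image.mp hf2
    have hee : e1 ≠ e2 := fun h => hne (by rw [h])
    refine ⟨?_, ?_, ?_, ?_⟩
    · simp only [matchF, redEdgeVert, ne_eq, Sum.inr.injEq, Sum.inl.injEq]
      exact hee
    · simp [matchF, redEdgeVert, redCopy]
    · simp [matchF, redEdgeVert, redCopy]
    · simp only [matchF, redCopy, ne_eq, Sum.inl.injEq, Prod.mk.injEq, not_and]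
      intro hc hi
      exact hee (covV_idxE_inj he1 he2 hc hi)
  have := Finset.le_sup (f := Finset.card) hmem
  rwa [Finset.card_image_of_injOn hinjF] at this

theorem core_alpha_eq_zero {E : Finset (Sym2 V)} {S : Finset V} (hS : IsVCover E S)
    {y : RedVert V → ℝ} (hy : y ∈ ((redGraph E).induce (redPi E S)).core) :
    y (redAlpha V) = 0 := by
  classical
  obtain ⟨hpos, hcov, hsum⟩ := hy
  set H := (redGraph E).induce (redPi E S) with hH
  -- the set of matched vertices
  set T : Finset (RedVert V) :=
    E.image redEdgeVert ∪ E.image (fun e => redCopy (covV S e) (idxE E S e)) with hT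
  have hTsub : T ⊆ H.verts := by
    intro w hw
    rw [hT, Finset.mem_union] at hw
    simp only [hH, induce, Finset.mem_inter]
    rcases hw with hw | hw
    · obtain ⟨e, he, rfl⟩ := Finset.mem_image.mp hw
      constructor
      · simp only [redGraph, Finset.mem_union]
        exact Or.inl (Or.inr (Finset.mem_image_of_mem _ he))
      · exact redEdgeVert_mem_redPi S he
    · obtain ⟨e, he, rfl⟩ := Finset.mem_image.mp hw
      constructor
      · simp only [redGraph, Finset.mem_union]
        refine Or.inl (Or.inl ?_)
        rw [Finset.mem_biUnion]
        exact ⟨covV S e, Finset.mem_univ _,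
          Finset.mem_image_of_mem _ (Finset.mem_range.mpr (idxE_lt hS he))⟩
      · exact redCopy_mem_redPi (covV_mem hS he).1 (idxE_lt hS he)
  have hdisjT : Disjoint (E.image (redEdgeVert (V := V)))
      (E.image (fun e => redCopy (covV S e) (idxE E S e))) := by
    rw [Finset.disjoint_left]
    intro w hw1 hw2
    obtain ⟨e1, _, rfl⟩ := Finset.mem_image.mp hw1
    obtain ⟨e2, _, he⟩ := Finset.mem_image.mp hw2
    simp [redEdgeVert, redCopy] at he
  have hTsum : (E.card : ℝ) ≤ ∑ w ∈ T, y w := by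
    rw [hT, Finset.sum_union hdisjT,
      Finset.sum_image (fun a _ b _ h => by simpa [redEdgeVert] using h),
      Finset.sum_image ?hinj]
    case hinj =>
      intro a ha b hb h
      simp only [redCopy, Sum.inl.injEq, Prod.mk.injEq] at h
      exact covV_idxE_inj ha hb h.1 h.2
    rw [← Finset.sum_add_distrib]
    calc (E.card : ℝ) = ∑ _e ∈ E, (1 : ℝ) := by simp
      _ ≤ _ := by
        apply Finset.sum_le_sum
        intro e he
        exact hcov (matchF E S e) (matchF_mem_induced_edges hS he)
  have hrest : ∑ w ∈ H.verts \ T, y w ≤ 0 := by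
    have := Finset.sum_sdiff (f := y) hTsub
    have hnu : ∑ w ∈ H.verts, y w = (E.card : ℝ) := by
      rw [hsum, nu_induced_eq hS]
    linarith
  have halphaT : redAlpha V ∉ T := by
    simp [hT, redAlpha, redEdgeVert, redCopy]
  have halphaV : redAlpha V ∈ H.verts := by
    simp only [hH, induce, Finset.mem_inter]
    refine ⟨?_, redAlpha_mem_redPi E S⟩
    simp [redGraph]
  have halpha : redAlpha V ∈ H.verts \ T := Finset.mem_sdiff.mpr ⟨halphaV, halphaT⟩
  have hle : y (redAlpha V) ≤ ∑ w ∈ H.verts \ T, y w := by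
    apply Finset.single_le_sum (fun w hw => hpos w (Finset.mem_sdiff.mp hw).1) halpha
  have := hpos _ halphaV
  linarith

/-- The explicit core element: `1` on all edge-vertices, `0` elsewhere. -/
noncomputable def yZero (E : Finset (Sym2 V)) : RedVert V → ℝ := fun w =>
  match w with
  | Sum.inr (Sum.inl e) => if e ∈ E then 1 else 0
  | _ => 0

theorem yZero_mem_core {E : Finset (Sym2 V)} {S : Finset V} (hS : IsVCover E S) :
    yZero E ∈ ((redGraph E).induce (redPi E S)).core := by
  classical
  refine ⟨?_, ?_, ?_⟩
  · intro v _
    rcases v with v | e | i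
    · simp [yZero]
    · simp only [yZero]
      split <;> norm_num
    · simp [yZero]
  · intro f hf
    rcases induced_edge_cases hf with ⟨e, he, v, _, j, rfl⟩ | ⟨e, he, rfl⟩
    · simp [yZero, redEdgeVert, redCopy, he]
    · simp [yZero, redEdgeVert, redAlpha, he]
  · rw [nu_induced_eq hS]
    set H := (redGraph E).induce (redPi E S) with hH
    have hsub : E.image (redEdgeVert (V := V)) ⊆ H.verts := by
      intro w hw
      obtain ⟨e, he, rfl⟩ := Finset.mem_image.mp hw
      simp only [hH, induce, Finset.mem_inter]
      refine ⟨?_, redEdgeVert_mem_redPi S he⟩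
      simp only [redGraph, Finset.mem_union]
      exact Or.inl (Or.inr (Finset.mem_image_of_mem _ he))
    rw [← Finset.sum_sdiff hsub]
    have h1 : ∑ w ∈ H.verts \ E.image (redEdgeVert (V := V)), yZero E w = 0 := by
      apply Finset.sum_eq_zero
      intro w hw
      obtain ⟨_, hw2⟩ := Finset.mem_sdiff.mp hw
      rcases w with v | e | i
      · simp [yZero]
      · simp only [yZero]
        rw [if_neg]
        intro he
        exact hw2 (Finset.mem_image_of_mem _ he)
      · simp [yZero]
    have h2 : ∑ w ∈ E.image (redEdgeVert (V := V)), yZero E w = (E.card : ℝ) := by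
      rw [Finset.sum_image (fun a _ b _ h => by simpa [redEdgeVert] using h)]
      calc ∑ e ∈ E, yZero E (redEdgeVert e) = ∑ _e ∈ E, (1 : ℝ) :=
            Finset.sum_congr rfl (fun e he => by simp [yZero, redEdgeVert, he])
        _ = (E.card : ℝ) := by simp
    rw [h1, h2, zero_add]

/-- If `S ⊆ V` is a vertex cover of `G`, then every core element of the induced
subgraph `G₀[Π(S)]` satisfies `y_α = 0`; hence `min_{y ∈ core(G₀[Π(S)])} (1 - y_α) = 1`. -/
theorem redGraph_core_alpha_of_vcover (E : Finset (Sym2 V)) (hE : ∀ e ∈ E, ¬ e.IsDiag)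
    (S : Finset V) (hS : IsVCover E S) :
    (∀ y ∈ ((redGraph E).induce (redPi E S)).core, y (redAlpha V) = 0) ∧
    sInf ((fun y : RedVert V → ℝ => 1 - y (redAlpha V)) ''
        ((redGraph E).induce (redPi E S)).core) = 1 := by
  constructor
  · intro y hy
    exact core_alpha_eq_zero hS hy
  · have himg : ((fun y : RedVert V → ℝ => 1 - y (redAlpha V)) ''
        ((redGraph E).induce (redPi E S)).core) = {1} := by
      apply Set.eq_singleton_iff_unique_mem.mpr
      constructor
      · exact ⟨yZero E, yZero_mem_core hS, by
          simp [yZero, redAlpha, core_alpha_eq_zero hS (yZero_mem_core hS)]⟩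
      · rintro x ⟨y, hy, rfl⟩
        show 1 - y (redAlpha V) = 1
        rw [core_alpha_eq_zero hS hy]
        norm_num
    rw [himg]
    exact csInf_singleton 1
end

section
/- If S ⊆ V is not a vertex cover of G (i.e., some edge of G has neither endpoint in S), then there exists a core element y ∈ core(G_0[Π(S)]) with y_α = 1; hence min_{y ∈ core(G_0[Π(S)])}(1 − y_α) = 0. -/
open FinGraph

variable {V : Type*} [Fintype V] [DecidableEq V]

set_option linter.unusedSectionVars false
set_option maxHeartbeats 1000000

section Aux
variable {V : Type*} [Fintype V] [DecidableEq V]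
open Finset Classical

lemma mem_redPi (E : Finset (Sym2 V)) (S : Finset V) (x : RedVert V) :
    x ∈ redPi E S ↔ (∃ v ∈ S, ∃ j < degE E v, x = redCopy v j) ∨
      (∃ e ∈ E, x = redEdgeVert e) ∨ x = redAlpha V := by
  simp [redPi, eq_comm]
  rw [or_comm, or_assoc]

lemma mem_redGraph_edges (E : Finset (Sym2 V)) (f : RedVert V × RedVert V) :
    f ∈ (redGraph E).edges ↔
      (∃ e ∈ E, ∃ v, v ∈ e ∧ ∃ j < degE E v, f = (redEdgeVert e, redCopy v j)) ∨
      (∃ e ∈ E, f = (redAlpha V, redEdgeVert e)) ∨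
      f = (redAlpha V, redBeta1 V) ∨ f = (redAlpha V, redBeta2 V) := by
  simp only [redGraph, Finset.mem_union, Finset.mem_biUnion, Finset.mem_image,
    Finset.mem_insert, Finset.mem_singleton, Finset.mem_range, Finset.mem_univ,
    Finset.mem_filter, true_and, eq_comm, or_assoc]


lemma redPi_subset (E : Finset (Sym2 V)) (S : Finset V) :
    redPi E S ⊆ (redGraph E).verts := by
  intro x hx
  rw [mem_redPi] at hx
  simp only [redGraph, Finset.mem_union, Finset.mem_biUnion, Finset.mem_image,
    Finset.mem_insert, Finset.mem_singleton, Finset.mem_range, Finset.mem_univ]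
  rcases hx with ⟨v, _, j, hj, rfl⟩ | ⟨e, he, rfl⟩ | rfl
  · exact Or.inl (Or.inl ⟨v, trivial, j, hj, rfl⟩)
  · exact Or.inl (Or.inr ⟨e, he, rfl⟩)
  · exact Or.inr (Or.inl rfl)

lemma induce_verts_eq (E : Finset (Sym2 V)) (S : Finset V) :
    ((redGraph E).induce (redPi E S)).verts = redPi E S := by
  simpa [FinGraph.induce] using redPi_subset E S

lemma mem_induce_edges (E : Finset (Sym2 V)) (S : Finset V) (f : RedVert V × RedVert V) :
    f ∈ ((redGraph E).induce (redPi E S)).edges ↔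
      (∃ e ∈ E, ∃ v ∈ S, v ∈ e ∧ ∃ j < degE E v, f = (redEdgeVert e, redCopy v j)) ∨
      (∃ e ∈ E, f = (redAlpha V, redEdgeVert e)) := by
  simp only [FinGraph.induce, Finset.mem_filter, mem_redGraph_edges]
  constructor
  · rintro ⟨(⟨e, he, v, hv, j, hj, rfl⟩ | ⟨e, he, rfl⟩ | rfl | rfl), h1, h2⟩
    · rw [mem_redPi] at h2
      rcases h2 with ⟨v', hv', j', hj', hc⟩ | ⟨e', _, hc⟩ | hc
      · simp only [redCopy, Sum.inl.injEq, Prod.mk.injEq] at hc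
        exact Or.inl ⟨e, he, v, hc.1 ▸ hv', hc.1 ▸ hv, j, hj, rfl⟩
      · simp [redCopy, redEdgeVert] at hc
      · simp [redCopy, redAlpha] at hc
    · exact Or.inr ⟨e, he, rfl⟩
    · rw [mem_redPi] at h2
      rcases h2 with ⟨v', hv', j', hj', hc⟩ | ⟨e', _, hc⟩ | hc <;>
        simp [redBeta1, redCopy, redEdgeVert, redAlpha] at hc
    · rw [mem_redPi] at h2
      rcases h2 with ⟨v', hv', j', hj', hc⟩ | ⟨e', _, hc⟩ | hc <;>
        simp [redBeta2, redCopy, redEdgeVert, redAlpha] at hc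
  · rintro (⟨e, he, v, hvS, hv, j, hj, rfl⟩ | ⟨e, he, rfl⟩)
    · refine ⟨Or.inl ⟨e, he, v, hv, j, hj, rfl⟩, ?_, ?_⟩ <;> rw [mem_redPi]
      · exact Or.inr (Or.inl ⟨e, he, rfl⟩)
      · exact Or.inl ⟨v, hvS, j, hj, rfl⟩
    · refine ⟨Or.inr (Or.inl ⟨e, he, rfl⟩), ?_, ?_⟩ <;> rw [mem_redPi]
      · exact Or.inr (Or.inr rfl)
      · exact Or.inr (Or.inl ⟨e, he, rfl⟩)

end Aux
section Aux2
variable {V : Type*} [Fintype V] [DecidableEq V]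
open Finset Classical

/-- Distinct copy index for edge `e` at vertex `v`. -/
noncomputable def cidx (E : Finset (Sym2 V)) (v : V) (e : Sym2 V) : ℕ :=
  if h : e ∈ E.filter (fun e' => v ∈ e') then ((E.filter fun e' => v ∈ e').equivFin ⟨e, h⟩).val
  else 0

lemma cidx_lt {E : Finset (Sym2 V)} {v : V} {e : Sym2 V} (he : e ∈ E) (hv : v ∈ e) :
    cidx E v e < degE E v := by
  rw [cidx, dif_pos (Finset.mem_filter.mpr ⟨he, hv⟩)]
  exact ((E.filter fun e' => v ∈ e').equivFin ⟨e, _⟩).isLt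

lemma cidx_inj {E : Finset (Sym2 V)} {v : V} {e e' : Sym2 V} (he : e ∈ E) (hv : v ∈ e)
    (he' : e' ∈ E) (hv' : v ∈ e') (h : cidx E v e = cidx E v e') : e = e' := by
  rw [cidx, cidx, dif_pos (Finset.mem_filter.mpr ⟨he, hv⟩),
    dif_pos (Finset.mem_filter.mpr ⟨he', hv'⟩)] at h
  have := ((E.filter fun e' => v ∈ e').equivFin).injective (Fin.ext h)
  exact Subtype.ext_iff.mp this

lemma matching_card_le (E : Finset (Sym2 V)) (S : Finset V) (M : Finset (RedVert V × RedVert V))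
    (hM : ((redGraph E).induce (redPi E S)).IsMatching M) :
    M.card ≤ (E.filter fun e => ∃ v ∈ S, v ∈ e).card + 1 := by
  obtain ⟨hMe, hMd⟩ := hM
  have hinj : Set.InjOn Prod.fst (M : Set (RedVert V × RedVert V)) := by
    intro f hf f' hf' h
    by_contra hne
    exact (hMd f hf f' hf' hne).1 h
  have h1 : M.card = (M.image Prod.fst).card := (Finset.card_image_of_injOn hinj).symm
  have h2 : M.image Prod.fst ⊆
      ((E.filter fun e => ∃ v ∈ S, v ∈ e).image redEdgeVert) ∪ {redAlpha V} := by
    intro x hx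
    obtain ⟨f, hf, rfl⟩ := Finset.mem_image.mp hx
    rcases (mem_induce_edges E S f).mp (hMe hf) with
      ⟨e, he, v, hvS, hv, j, hj, rfl⟩ | ⟨e, he, rfl⟩
    · exact Finset.mem_union_left _ (Finset.mem_image.mpr
        ⟨e, Finset.mem_filter.mpr ⟨he, v, hvS, hv⟩, rfl⟩)
    · exact Finset.mem_union_right _ (Finset.mem_singleton.mpr rfl)
  calc M.card = (M.image Prod.fst).card := h1
    _ ≤ (((E.filter fun e => ∃ v ∈ S, v ∈ e).image redEdgeVert) ∪ {redAlpha V}).card :=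
        Finset.card_le_card h2
    _ ≤ ((E.filter fun e => ∃ v ∈ S, v ∈ e).image redEdgeVert).card + 1 := by
        simpa using Finset.card_union_le ((E.filter fun e => ∃ v ∈ S, v ∈ e).image redEdgeVert) {redAlpha V}
    _ ≤ _ := by
        gcongr
        exact Finset.card_image_le

end Aux2
section Aux3
variable {V : Type*} [Fintype V] [DecidableEq V]
open Finset Classical

lemma exists_good_matching (E : Finset (Sym2 V)) (S : Finset V) (e₀ : Sym2 V) (he₀ : e₀ ∈ E)
    (h₀ : ¬ ∃ v ∈ S, v ∈ e₀) :
    ∃ M₀ : Finset (RedVert V × RedVert V),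
      ((redGraph E).induce (redPi E S)).IsMatching M₀ ∧
      M₀.card = (E.filter fun e => ∃ v ∈ S, v ∈ e).card + 1 ∧
      (redAlpha V, redEdgeVert e₀) ∈ M₀ := by
  classical
  set C : Finset (Sym2 V) := E.filter fun e => ∃ v ∈ S, v ∈ e with hC
  have hvce : ∀ e : {x // x ∈ C}, ∃ v ∈ S, v ∈ (e : Sym2 V) :=
    fun e => (Finset.mem_filter.mp e.2).2
  have hCE : ∀ e : {x // x ∈ C}, (e : Sym2 V) ∈ E := fun e => (Finset.mem_filter.mp e.2).1
  set σ : {x // x ∈ C} → V := fun e => (hvce e).choose with hσ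
  have hσS : ∀ e : {x // x ∈ C}, σ e ∈ S := fun e => (hvce e).choose_spec.1
  have hσe : ∀ e : {x // x ∈ C}, σ e ∈ (e : Sym2 V) := fun e => (hvce e).choose_spec.2
  set g : {x // x ∈ C} → RedVert V × RedVert V :=
    fun e => (redEdgeVert (e : Sym2 V), redCopy (σ e) (cidx E (σ e) (e : Sym2 V))) with hg
  set M₀ : Finset (RedVert V × RedVert V) :=
    C.attach.image g ∪ {(redAlpha V, redEdgeVert e₀)} with hM₀
  have hginj : Function.Injective g := by
    intro a b hab
    have : redEdgeVert (a : Sym2 V) = redEdgeVert (b : Sym2 V) := congrArg Prod.fst hab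
    exact Subtype.ext (by simpa [redEdgeVert] using this)
  have he₀C : e₀ ∉ C := fun h => h₀ (Finset.mem_filter.mp h).2
  have hmemM₀ : ∀ f ∈ M₀, (∃ e : {x // x ∈ C}, f = g e) ∨ f = (redAlpha V, redEdgeVert e₀) := by
    intro f hf
    rcases Finset.mem_union.mp hf with h | h
    · obtain ⟨e, _, rfl⟩ := Finset.mem_image.mp h
      exact Or.inl ⟨e, rfl⟩
    · exact Or.inr (Finset.mem_singleton.mp h)
  have hsub : M₀ ⊆ ((redGraph E).induce (redPi E S)).edges := by
    intro f hf
    rw [mem_induce_edges]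
    rcases hmemM₀ f hf with ⟨e, rfl⟩ | rfl
    · exact Or.inl ⟨e, hCE e, σ e, hσS e, hσe e, _, cidx_lt (hCE e) (hσe e), rfl⟩
    · exact Or.inr ⟨e₀, he₀, rfl⟩
  have hgdis : ∀ a b : {x // x ∈ C}, a ≠ b →
      (g a).1 ≠ (g b).1 ∧ (g a).1 ≠ (g b).2 ∧ (g a).2 ≠ (g b).1 ∧ (g a).2 ≠ (g b).2 := by
    intro a b hab
    refine ⟨?_, by simp [hg, redEdgeVert, redCopy], by simp [hg, redEdgeVert, redCopy], ?_⟩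
    · simp only [hg, redEdgeVert, Sum.inr.injEq, Sum.inl.injEq, ne_eq]
      exact fun h => hab (Subtype.ext h)
    · simp only [hg, redCopy, Sum.inl.injEq, Prod.mk.injEq, ne_eq, not_and]
      intro hv hj
      exact hab (Subtype.ext (cidx_inj (hCE a) (hσe a) (hCE b) (hv ▸ hσe b) (hv ▸ hj)))
  have hmatch : ((redGraph E).induce (redPi E S)).IsMatching M₀ := by
    refine ⟨hsub, ?_⟩
    intro f hf f' hf' hne
    rcases hmemM₀ f hf with ⟨a, rfl⟩ | rfl <;> rcases hmemM₀ f' hf' with ⟨b, rfl⟩ | rfl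
    · exact hgdis a b (fun h => hne (congrArg g h))
    · refine ⟨by simp [hg, redEdgeVert, redAlpha], ?_, by simp [hg, redCopy, redAlpha],
        by simp [hg, redCopy, redEdgeVert]⟩
      simp only [hg, redEdgeVert, Sum.inr.injEq, Sum.inl.injEq, ne_eq]
      exact fun h => he₀C (h ▸ a.2)
    · refine ⟨by simp [hg, redEdgeVert, redAlpha], by simp [hg, redAlpha, redCopy], ?_,
        by simp [hg, redEdgeVert, redCopy]⟩
      simp only [hg, redEdgeVert, Sum.inr.injEq, Sum.inl.injEq, ne_eq]
      exact fun h => he₀C (h ▸ b.2)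
    · exact absurd rfl hne
  have hcard : M₀.card = C.card + 1 := by
    rw [hM₀, Finset.card_union_of_disjoint, Finset.card_image_of_injective _ hginj,
      Finset.card_attach, Finset.card_singleton]
    simp only [Finset.disjoint_singleton_right, Finset.mem_image]
    rintro ⟨e, -, he⟩
    have : redEdgeVert (e : Sym2 V) = redAlpha V := congrArg Prod.fst he
    simp [redEdgeVert, redAlpha] at this
  exact ⟨M₀, hmatch, hcard, Finset.mem_union_right _ (Finset.mem_singleton.mpr rfl)⟩

lemma nu_induce (E : Finset (Sym2 V)) (S : Finset V) (e₀ : Sym2 V) (he₀ : e₀ ∈ E)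
    (h₀ : ¬ ∃ v ∈ S, v ∈ e₀) :
    ((redGraph E).induce (redPi E S)).nu = (E.filter fun e => ∃ v ∈ S, v ∈ e).card + 1 := by
  classical
  obtain ⟨M₀, hmatch, hcard, -⟩ := exists_good_matching E S e₀ he₀ h₀
  apply le_antisymm
  · apply Finset.sup_le
    intro M hM
    rw [Finset.mem_filter] at hM
    exact matching_card_le E S M hM.2
  · rw [← hcard]
    apply Finset.le_sup (f := Finset.card)
    rw [Finset.mem_filter, Finset.mem_powerset]
    exact ⟨hmatch.1, hmatch⟩

end Aux3
section Aux4
variable {V : Type*} [Fintype V] [DecidableEq V]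
open Finset Classical

/-- The core element: 1 on `α` and on covered edge-vertices, 0 elsewhere. -/
noncomputable def coreY (S : Finset V) : RedVert V → ℝ
  | Sum.inl _ => 0
  | Sum.inr (Sum.inl e) => if ∃ v ∈ S, v ∈ e then 1 else 0
  | Sum.inr (Sum.inr i) => if i = 0 then 1 else 0

lemma coreY_alpha (S : Finset V) : coreY S (redAlpha V) = 1 := by simp [coreY, redAlpha]

lemma coreY_nonneg (S : Finset V) (x : RedVert V) : 0 ≤ coreY S x := by
  rcases x with _ | (e | i)
  · exact le_refl _
  · simp only [coreY]; split_ifs <;> norm_num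
  · simp only [coreY]; split_ifs <;> norm_num

lemma coreY_mem_core (E : Finset (Sym2 V)) (S : Finset V) (e₀ : Sym2 V) (he₀ : e₀ ∈ E)
    (h₀ : ¬ ∃ v ∈ S, v ∈ e₀) :
    coreY S ∈ ((redGraph E).induce (redPi E S)).core := by
  classical
  refine ⟨fun v _ => coreY_nonneg S v, ?_, ?_⟩
  · intro f hf
    rcases (mem_induce_edges E S f).mp hf with ⟨e, he, v, hvS, hv, j, hj, rfl⟩ | ⟨e, he, rfl⟩
    · have h1 : coreY S (redEdgeVert e) = 1 := by
        simp only [coreY, redEdgeVert, if_pos (⟨v, hvS, hv⟩ : ∃ v ∈ S, v ∈ e)]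
      simpa [h1] using coreY_nonneg S (redCopy v j)
    · simpa [coreY_alpha] using coreY_nonneg S (redEdgeVert e)
  · rw [induce_verts_eq, nu_induce E S e₀ he₀ h₀]
    have hsub : E.image redEdgeVert ∪ {redAlpha V} ⊆ redPi E S := by
      intro x hx
      rw [mem_redPi]
      rcases Finset.mem_union.mp hx with h | h
      · obtain ⟨e, he, rfl⟩ := Finset.mem_image.mp h
        exact Or.inr (Or.inl ⟨e, he, rfl⟩)
      · exact Or.inr (Or.inr (Finset.mem_singleton.mp h))
    rw [← Finset.sum_subset hsub]
    · have hαE : redAlpha V ∉ E.image redEdgeVert := by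
        simp [redEdgeVert, redAlpha]
      rw [Finset.sum_union (Finset.disjoint_singleton_right.mpr hαE), Finset.sum_singleton,
        coreY_alpha, Finset.sum_image (fun a _ b _ h => by simpa [redEdgeVert] using h)]
      have : ∀ e ∈ E, coreY S (redEdgeVert e) = if ∃ v ∈ S, v ∈ e then (1:ℝ) else 0 :=
        fun e _ => rfl
      rw [Finset.sum_congr rfl this, Finset.sum_ite, Finset.sum_const, Finset.sum_const]
      push_cast
      simp
    · intro x hx hnx
      rcases (mem_redPi E S x).mp hx with ⟨v, _, j, _, rfl⟩ | ⟨e, he, rfl⟩ | rfl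
      · rfl
      · exact absurd (Finset.mem_union_left _ (Finset.mem_image.mpr ⟨e, he, rfl⟩)) hnx
      · exact absurd (Finset.mem_union_right _ (Finset.mem_singleton.mpr rfl)) hnx

end Aux4
section Aux5
variable {V : Type*} [Fintype V] [DecidableEq V]
open Finset Classical

lemma induce_edge_ends (E : Finset (Sym2 V)) (S : Finset V) (f : RedVert V × RedVert V)
    (hf : f ∈ ((redGraph E).induce (redPi E S)).edges) :
    f.1 ∈ redPi E S ∧ f.2 ∈ redPi E S ∧ f.1 ≠ f.2 := by
  rcases (mem_induce_edges E S f).mp hf with ⟨e, he, v, hvS, hv, j, hj, rfl⟩ | ⟨e, he, rfl⟩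
  · refine ⟨(mem_redPi E S _).mpr (Or.inr (Or.inl ⟨e, he, rfl⟩)),
      (mem_redPi E S _).mpr (Or.inl ⟨v, hvS, j, hj, rfl⟩), by simp [redEdgeVert, redCopy]⟩
  · exact ⟨(mem_redPi E S _).mpr (Or.inr (Or.inr rfl)),
      (mem_redPi E S _).mpr (Or.inr (Or.inl ⟨e, he, rfl⟩)), by simp [redAlpha, redEdgeVert]⟩

lemma core_alpha_le_one (E : Finset (Sym2 V)) (S : Finset V) (e₀ : Sym2 V) (he₀ : e₀ ∈ E)
    (h₀ : ¬ ∃ v ∈ S, v ∈ e₀) (y : RedVert V → ℝ)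
    (hy : y ∈ ((redGraph E).induce (redPi E S)).core) : y (redAlpha V) ≤ 1 := by
  classical
  obtain ⟨M₀, ⟨hsub, hdis⟩, hcard, hα⟩ := exists_good_matching E S e₀ he₀ h₀
  obtain ⟨hpos, hedge, hsum⟩ := hy
  set G := (redGraph E).induce (redPi E S) with hG
  set T : Finset (RedVert V) := M₀.biUnion fun f => ({f.1, f.2} : Finset (RedVert V)) with hT
  have hTsub : T ⊆ G.verts := by
    rw [hG, induce_verts_eq]
    intro x hx
    obtain ⟨f, hf, hx⟩ := Finset.mem_biUnion.mp hx
    obtain ⟨h1, h2, -⟩ := induce_edge_ends E S f (hsub hf)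
    rcases Finset.mem_insert.mp hx with rfl | hx
    · exact h1
    · exact Finset.mem_singleton.mp hx ▸ h2
  have hdisj : (↑M₀ : Set (RedVert V × RedVert V)).PairwiseDisjoint
      (fun f => ({f.1, f.2} : Finset (RedVert V))) := by
    intro f hf f' hf' hne
    obtain ⟨d1, d2, d3, d4⟩ := hdis f hf f' hf' hne
    simp only [Function.onFun]
    rw [Finset.disjoint_left]
    intro x hx hx'
    have hx1 : x = f.1 ∨ x = f.2 := by simpa using hx
    have hx2 : x = f'.1 ∨ x = f'.2 := by simpa using hx'
    rcases hx1 with rfl | rfl <;> rcases hx2 with h | h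
    · exact d1 h
    · exact d2 h
    · exact d3 h
    · exact d4 h
  have hTsum : ∑ x ∈ T, y x = ∑ f ∈ M₀, (y f.1 + y f.2) := by
    rw [hT, Finset.sum_biUnion hdisj]
    refine Finset.sum_congr rfl fun f hf => ?_
    exact Finset.sum_pair (induce_edge_ends E S f (hsub hf)).2.2
  have hle : ∑ x ∈ T, y x ≤ ((E.filter fun e => ∃ v ∈ S, v ∈ e).card + 1 : ℝ) := by
    calc ∑ x ∈ T, y x ≤ ∑ x ∈ G.verts, y x :=
          Finset.sum_le_sum_of_subset_of_nonneg hTsub fun i hi _ => hpos i hi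
      _ = (G.nu : ℝ) := hsum
      _ = _ := by rw [hG, nu_induce E S e₀ he₀ h₀]; push_cast; ring
  have hsplit : ∑ f ∈ M₀.erase (redAlpha V, redEdgeVert e₀), (y f.1 + y f.2) +
      (y (redAlpha V) + y (redEdgeVert e₀)) = ∑ f ∈ M₀, (y f.1 + y f.2) :=
    Finset.sum_erase_add _ _ hα
  have herase : ((E.filter fun e => ∃ v ∈ S, v ∈ e).card : ℝ) ≤
      ∑ f ∈ M₀.erase (redAlpha V, redEdgeVert e₀), (y f.1 + y f.2) := by
    have hcard' : (M₀.erase (redAlpha V, redEdgeVert e₀)).card =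
        (E.filter fun e => ∃ v ∈ S, v ∈ e).card := by
      rw [Finset.card_erase_of_mem hα, hcard]
      omega
    calc ((E.filter fun e => ∃ v ∈ S, v ∈ e).card : ℝ)
        = (M₀.erase (redAlpha V, redEdgeVert e₀)).card • (1:ℝ) := by rw [hcard']; simp
      _ ≤ ∑ f ∈ M₀.erase (redAlpha V, redEdgeVert e₀), (y f.1 + y f.2) := by
          refine Finset.card_nsmul_le_sum _ _ _ fun f hf => ?_
          exact hedge f (hsub (Finset.mem_of_mem_erase hf))
  have he₀pos : 0 ≤ y (redEdgeVert e₀) := by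
    refine hpos _ ?_
    rw [hG, induce_verts_eq, mem_redPi]
    exact Or.inr (Or.inl ⟨e₀, he₀, rfl⟩)
  linarith [hTsum, hle, hsplit, herase]

end Aux5
/-- If `S ⊆ V` is not a vertex cover of `G`, then there exists a core element of
the induced subgraph `G₀[Π(S)]` with `y_α = 1`; hence `min_{y ∈ core(G₀[Π(S)])} (1 - y_α) = 0`. -/
theorem redGraph_core_alpha_of_not_vcover (E : Finset (Sym2 V)) (hE : ∀ e ∈ E, ¬ e.IsDiag)
    (S : Finset V) (hS : ¬ IsVCover E S) :
    (∃ y ∈ ((redGraph E).induce (redPi E S)).core, y (redAlpha V) = 1) ∧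
    sInf ((fun y : RedVert V → ℝ => 1 - y (redAlpha V)) ''
        ((redGraph E).induce (redPi E S)).core) = 0 := by
  classical
  simp only [IsVCover, not_forall] at hS
  obtain ⟨e₀, he₀, h₀⟩ := hS
  have hmem := coreY_mem_core E S e₀ he₀ h₀
  refine ⟨⟨coreY S, hmem, coreY_alpha S⟩, ?_⟩
  have h0mem : (0:ℝ) ∈ ((fun y : RedVert V → ℝ => 1 - y (redAlpha V)) ''
      ((redGraph E).induce (redPi E S)).core) := ⟨coreY S, hmem, by show 1 - coreY S (redAlpha V) = 0; rw [coreY_alpha]; ring⟩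
  have hlb : ∀ z ∈ ((fun y : RedVert V → ℝ => 1 - y (redAlpha V)) ''
      ((redGraph E).induce (redPi E S)).core), (0:ℝ) ≤ z := by
    rintro z ⟨y, hy, rfl⟩
    have := core_alpha_le_one E S e₀ he₀ h₀ y hy
    simp only
    linarith
  exact le_antisymm (csInf_le ⟨0, fun z hz => hlb z hz⟩ h0mem) (le_csInf ⟨0, h0mem⟩ hlb)
end

section
/- For any finite simple graph G=(V,E), Σ_{S ⊆ V} min_{y ∈ core(G_0[Π(S)])}(1 − y_α) equals the number of vertex covers of G; equivalently, the expected value of min_{y ∈ core(G_0[Π(S)])}(1 − y_α) when S is a uniformly random subset of V equals (number of vertex covers of G)/2^{|V|}. -/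
open FinGraph

variable {V : Type*} [Fintype V] [DecidableEq V]

attribute [local instance] Classical.propDecidable

set_option linter.unusedSectionVars false
set_option linter.unusedVariables false
set_option linter.unusedTactic false

namespace RedAux

variable (E : Finset (Sym2 V)) (S : Finset V)

lemma sym2_exists_mem (e : Sym2 V) : ∃ v, v ∈ e := by
  induction e using Sym2.ind with | _ x y => exact ⟨x, by simp⟩

/-- covered edges -/
noncomputable def ES : Finset (Sym2 V) := E.filter fun e => ∃ v ∈ S, v ∈ e

lemma mem_ES {e : Sym2 V} : e ∈ ES E S ↔ e ∈ E ∧ ∃ v ∈ S, v ∈ e := Finset.mem_filter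

noncomputable def vsel (e : Sym2 V) : V :=
  if h : ∃ v ∈ S, v ∈ e then h.choose else (sym2_exists_mem e).choose

lemma vsel_mem_S {e : Sym2 V} (h : ∃ v ∈ S, v ∈ e) : vsel S e ∈ S := by
  rw [vsel, dif_pos h]; exact h.choose_spec.1

lemma vsel_mem {e : Sym2 V} (h : ∃ v ∈ S, v ∈ e) : vsel S e ∈ e := by
  rw [vsel, dif_pos h]; exact h.choose_spec.2

noncomputable def jsel (e : Sym2 V) : ℕ :=
  if h : e ∈ E.filter (fun f => vsel S e ∈ f) then
    ((E.filter (fun f => vsel S e ∈ f)).equivFin ⟨e, h⟩ : Fin _).val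
  else 0

lemma jsel_lt {e : Sym2 V} (he : e ∈ E) (h : ∃ v ∈ S, v ∈ e) :
    jsel E S e < degE E (vsel S e) := by
  have hm : e ∈ E.filter (fun f => vsel S e ∈ f) :=
    Finset.mem_filter.2 ⟨he, vsel_mem S h⟩
  rw [jsel, dif_pos hm]
  exact ((E.filter (fun f => vsel S e ∈ f)).equivFin ⟨e, hm⟩).isLt

lemma jsel_inj {e f : Sym2 V} (he : e ∈ ES E S) (hf : f ∈ ES E S)
    (hv : vsel S e = vsel S f) (hj : jsel E S e = jsel E S f) : e = f := by
  obtain ⟨heE, hec⟩ := mem_ES E S |>.1 he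
  obtain ⟨hfE, hfc⟩ := mem_ES E S |>.1 hf
  have hme : e ∈ E.filter (fun g => vsel S e ∈ g) :=
    Finset.mem_filter.2 ⟨heE, vsel_mem S hec⟩
  have hmf : f ∈ E.filter (fun g => vsel S e ∈ g) := by
    rw [hv]; exact Finset.mem_filter.2 ⟨hfE, vsel_mem S hfc⟩
  rw [jsel, jsel, dif_pos hme] at hj
  rw [← hv] at hj
  rw [dif_pos hmf] at hj
  have := (E.filter (fun g => vsel S e ∈ g)).equivFin.injective (Fin.val_injective hj)
  exact Subtype.ext_iff.1 this

noncomputable def wfun (e : Sym2 V) : RedVert V := redCopy (vsel S e) (jsel E S e)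

lemma wfun_injOn {e f : Sym2 V} (he : e ∈ ES E S) (hf : f ∈ ES E S)
    (h : wfun E S e = wfun E S f) : e = f := by
  rw [wfun, wfun, redCopy, redCopy] at h
  simp only [Sum.inl.injEq, Prod.mk.injEq] at h
  exact jsel_inj E S he hf h.1 h.2

/-- the copies part of `redPi` -/
noncomputable def piCopies : Finset (RedVert V) :=
  S.biUnion fun v => (Finset.range (degE E v)).image fun j => redCopy v j

lemma mem_piCopies {x : RedVert V} :
    x ∈ piCopies E S ↔ ∃ v ∈ S, ∃ j < degE E v, x = redCopy v j := by
  simp [piCopies, eq_comm]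

lemma redPi_eq : redPi E S = piCopies E S ∪ E.image redEdgeVert ∪ {redAlpha V} := rfl

lemma mem_redPi {x : RedVert V} :
    x ∈ redPi E S ↔ (∃ v ∈ S, ∃ j < degE E v, x = redCopy v j) ∨
      (∃ e ∈ E, x = redEdgeVert e) ∨ x = redAlpha V := by
  rw [redPi_eq]
  simp [mem_piCopies, or_assoc, eq_comm (b := x)]
  exact or_rotate

lemma wfun_mem_piCopies {e : Sym2 V} (he : e ∈ ES E S) : wfun E S e ∈ piCopies E S := by
  obtain ⟨heE, hec⟩ := mem_ES E S |>.1 he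
  exact (mem_piCopies E S).2 ⟨vsel S e, vsel_mem_S S hec, jsel E S e, jsel_lt E S heE hec, rfl⟩

lemma sum_redPi (y : RedVert V → ℝ) :
    ∑ x ∈ redPi E S, y x =
      (∑ x ∈ piCopies E S, y x) + (∑ e ∈ E, y (redEdgeVert e)) + y (redAlpha V) := by
  rw [redPi_eq]
  have d12 : Disjoint (piCopies E S) (E.image redEdgeVert) := by
    rw [Finset.disjoint_left]
    intro x hx hx2
    obtain ⟨v, _, j, _, rfl⟩ := (mem_piCopies E S).1 hx
    simp [redCopy, redEdgeVert] at hx2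
  have d3 : Disjoint (piCopies E S ∪ E.image redEdgeVert) ({redAlpha V} : Finset (RedVert V)) := by
    rw [Finset.disjoint_right]
    intro x hx hx2
    simp only [Finset.mem_singleton] at hx
    subst hx
    rcases Finset.mem_union.1 hx2 with h | h
    · obtain ⟨v, _, j, _, h⟩ := (mem_piCopies E S).1 h
      simp [redCopy, redAlpha] at h
    · simp only [Finset.mem_image] at h
      obtain ⟨e, _, h⟩ := h
      simp [redEdgeVert, redAlpha] at h
  rw [Finset.sum_union d3, Finset.sum_union d12, Finset.sum_singleton,
    Finset.sum_image (by intro a _ b _ h; simpa [redEdgeVert] using h)]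

-- H abbreviation
noncomputable def H : FinGraph (RedVert V) := (redGraph E).induce (redPi E S)

lemma H_verts : (H E S).verts = redPi E S := by
  rw [H, induce]
  refine Finset.inter_eq_right.2 ?_
  intro x hx
  rcases (mem_redPi E S).1 hx with ⟨v, _, j, hj, rfl⟩ | ⟨e, he, rfl⟩ | rfl
  · exact Finset.mem_union.2 (Or.inl (Finset.mem_union.2 (Or.inl (Finset.mem_biUnion.2
      ⟨v, Finset.mem_univ v, Finset.mem_image.2 ⟨j, Finset.mem_range.2 hj, rfl⟩⟩))))
  · exact Finset.mem_union.2 (Or.inl (Finset.mem_union.2 (Or.inr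
      (Finset.mem_image.2 ⟨e, he, rfl⟩))))
  · exact Finset.mem_union.2 (Or.inr (by simp))

lemma beta1_not_mem : redBeta1 V ∉ redPi E S := by
  rw [mem_redPi]
  rintro (⟨v, _, j, _, h⟩ | ⟨e, _, h⟩ | h) <;> simp [redBeta1, redCopy, redEdgeVert, redAlpha] at h

lemma beta2_not_mem : redBeta2 V ∉ redPi E S := by
  rw [mem_redPi]
  rintro (⟨v, _, j, _, h⟩ | ⟨e, _, h⟩ | h) <;> simp [redBeta2, redCopy, redEdgeVert, redAlpha] at h

lemma alpha_mem : redAlpha V ∈ redPi E S := (mem_redPi E S).2 (Or.inr (Or.inr rfl))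

lemma ev_mem {e : Sym2 V} (he : e ∈ E) : redEdgeVert e ∈ redPi E S :=
  (mem_redPi E S).2 (Or.inr (Or.inl ⟨e, he, rfl⟩))

lemma copy_mem {v : V} {j : ℕ} (hv : v ∈ S) (hj : j < degE E v) :
    redCopy v j ∈ redPi E S := (mem_redPi E S).2 (Or.inl ⟨v, hv, j, hj, rfl⟩)

lemma mem_H_edges {p : RedVert V × RedVert V} :
    p ∈ (H E S).edges ↔
      (∃ e ∈ E, ∃ v ∈ S, v ∈ e ∧ ∃ j < degE E v, p = (redEdgeVert e, redCopy v j)) ∨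
      (∃ e ∈ E, p = (redAlpha V, redEdgeVert e)) := by
  rw [H, induce]
  simp only [Finset.mem_filter]
  constructor
  · rintro ⟨hp, hp1, hp2⟩
    simp only [redGraph, Finset.mem_union, Finset.mem_biUnion, Finset.mem_image,
      Finset.mem_filter, Finset.mem_univ, true_and, Finset.mem_range, Finset.mem_insert,
      Finset.mem_singleton] at hp
    rcases hp with (⟨e, he, v, hv, j, hj, rfl⟩ | ⟨e, he, rfl⟩) | (rfl | rfl)
    · -- shape A : need v ∈ S from hp2
      refine Or.inl ⟨e, he, v, ?_, hv, j, hj, rfl⟩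
      rcases (mem_redPi E S).1 hp2 with ⟨v', hv', j', _, h⟩ | ⟨e', _, h⟩ | h
      · simp only [redCopy, Sum.inl.injEq, Prod.mk.injEq] at h
        rwa [← h.1] at hv'
      · simp [redCopy, redEdgeVert] at h
      · simp [redCopy, redAlpha] at h
    · exact Or.inr ⟨e, he, rfl⟩
    · exact absurd hp2 (beta1_not_mem E S)
    · exact absurd hp2 (beta2_not_mem E S)
  · rintro (⟨e, he, v, hvS, hv, j, hj, rfl⟩ | ⟨e, he, rfl⟩)
    · refine ⟨?_, ev_mem E S he, copy_mem E S hvS hj⟩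
      simp only [redGraph, Finset.mem_union]
      exact Or.inl (Or.inl (Finset.mem_biUnion.2 ⟨e, he, Finset.mem_biUnion.2
        ⟨v, Finset.mem_filter.2 ⟨Finset.mem_univ v, hv⟩,
          Finset.mem_image.2 ⟨j, Finset.mem_range.2 hj, rfl⟩⟩⟩))
    · refine ⟨?_, alpha_mem E S, ev_mem E S he⟩
      simp only [redGraph, Finset.mem_union]
      exact Or.inl (Or.inr (Finset.mem_image.2 ⟨e, he, rfl⟩))

lemma ev_wfun_mem_H_edges {e : Sym2 V} (he : e ∈ ES E S) :
    (redEdgeVert e, wfun E S e) ∈ (H E S).edges := by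
  obtain ⟨heE, hec⟩ := mem_ES E S |>.1 he
  exact (mem_H_edges E S).2 (Or.inl ⟨e, heE, vsel S e, vsel_mem_S S hec, vsel_mem S hec,
    jsel E S e, jsel_lt E S heE hec, rfl⟩)

end RedAux

namespace RedAux

/-- extract the edge-vertex of an edge of `H` -/
def gsel : RedVert V × RedVert V → RedVert V := fun p =>
  match p.2 with
  | Sum.inr (Sum.inl _) => p.2
  | _ => p.1

lemma gsel_eq_or (p : RedVert V × RedVert V) : gsel p = p.1 ∨ gsel p = p.2 := by
  obtain ⟨a, b⟩ := p
  rcases b with _ | b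
  · exact Or.inl rfl
  · rcases b with _ | _
    · exact Or.inr rfl
    · exact Or.inl rfl

lemma gsel_shapeA (e : Sym2 V) (v : V) (j : ℕ) :
    gsel (redEdgeVert e, redCopy v j) = redEdgeVert e := rfl

lemma gsel_shapeB (e : Sym2 V) :
    gsel (redAlpha V, redEdgeVert e) = redEdgeVert e := rfl

variable (E : Finset (Sym2 V)) (S : Finset V)

lemma gsel_injOn {M : Finset (RedVert V × RedVert V)} (hM : (H E S).IsMatching M) :
    ∀ p ∈ M, ∀ q ∈ M, gsel p = gsel q → p = q := by
  intro p hp q hq hg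
  by_contra hne
  obtain ⟨h1, h2, h3, h4⟩ := hM.2 p hp q hq hne
  rcases gsel_eq_or p with hgp | hgp <;> rcases gsel_eq_or q with hgq | hgq <;>
    rw [hgp, hgq] at hg
  · exact h1 hg
  · exact h2 hg
  · exact h3 hg
  · exact h4 hg

lemma matching_card_le_E {M : Finset (RedVert V × RedVert V)}
    (hM : (H E S).IsMatching M) : M.card ≤ E.card := by
  have h1 : M.card = (M.image gsel).card :=
    (Finset.card_image_of_injOn (fun p hp q hq => gsel_injOn E S hM p hp q hq)).symm
  have h2 : M.image gsel ⊆ E.image redEdgeVert := by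
    intro x hx
    obtain ⟨p, hp, rfl⟩ := Finset.mem_image.1 hx
    rcases (mem_H_edges E S).1 (hM.1 hp) with ⟨e, he, v, _, _, j, _, rfl⟩ | ⟨e, he, rfl⟩
    · rw [gsel_shapeA]; exact Finset.mem_image.2 ⟨e, he, rfl⟩
    · rw [gsel_shapeB]; exact Finset.mem_image.2 ⟨e, he, rfl⟩
  calc M.card = (M.image gsel).card := h1
    _ ≤ (E.image redEdgeVert).card := Finset.card_le_card h2
    _ ≤ E.card := Finset.card_image_le

lemma matching_card_le_ES {M : Finset (RedVert V × RedVert V)}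
    (hM : (H E S).IsMatching M) : M.card ≤ (ES E S).card + 1 := by
  classical
  set Ma := M.filter (fun p => p.1 = redAlpha V) with hMa
  set Mb := M.filter (fun p => ¬ p.1 = redAlpha V) with hMb
  have hcard : Ma.card + Mb.card = M.card := Finset.card_filter_add_card_filter_not _
  have hMa1 : Ma.card ≤ 1 := by
    refine Finset.card_le_one.2 ?_
    intro p hp q hq
    by_contra hne
    obtain ⟨h1, _, _, _⟩ := hM.2 p (Finset.mem_filter.1 hp).1 q (Finset.mem_filter.1 hq).1 hne
    exact h1 (((Finset.mem_filter.1 hp).2).trans ((Finset.mem_filter.1 hq).2).symm)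
  have hMb1 : Mb.card ≤ (ES E S).card := by
    have hinj : ∀ p ∈ Mb, ∀ q ∈ Mb, gsel p = gsel q → p = q := fun p hp q hq =>
      gsel_injOn E S hM p (Finset.mem_filter.1 hp).1 q (Finset.mem_filter.1 hq).1
    have h1 : Mb.card = (Mb.image gsel).card := (Finset.card_image_of_injOn hinj).symm
    have h2 : Mb.image gsel ⊆ (ES E S).image redEdgeVert := by
      intro x hx
      obtain ⟨p, hp, rfl⟩ := Finset.mem_image.1 hx
      obtain ⟨hpM, hpa⟩ := Finset.mem_filter.1 hp
      rcases (mem_H_edges E S).1 (hM.1 hpM) with ⟨e, he, v, hvS, hv, j, _, rfl⟩ | ⟨e, he, rfl⟩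
      · rw [gsel_shapeA]
        exact Finset.mem_image.2 ⟨e, (mem_ES E S).2 ⟨he, v, hvS, hv⟩, rfl⟩
      · exact absurd rfl hpa
    calc Mb.card = (Mb.image gsel).card := h1
      _ ≤ ((ES E S).image redEdgeVert).card := Finset.card_le_card h2
      _ ≤ (ES E S).card := Finset.card_image_le
  omega

lemma nu_le {n : ℕ} (h : ∀ M : Finset (RedVert V × RedVert V), (H E S).IsMatching M → M.card ≤ n) :
    (H E S).nu ≤ n := by
  rw [nu]
  refine Finset.sup_le ?_
  intro M hM
  exact h M (Finset.mem_filter.1 hM).2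

lemma le_nu {M : Finset (RedVert V × RedVert V)} (h : (H E S).IsMatching M) :
    M.card ≤ (H E S).nu := by
  rw [nu]
  exact Finset.le_sup (f := Finset.card)
    (Finset.mem_filter.2 ⟨Finset.mem_powerset.2 h.1, h⟩)

/-- the canonical matching on covered edges -/
noncomputable def Mcov : Finset (RedVert V × RedVert V) :=
  (ES E S).image fun e => (redEdgeVert e, wfun E S e)

lemma Mcov_card : (Mcov E S).card = (ES E S).card := by
  refine Finset.card_image_of_injOn ?_
  intro e _ f _ h
  have := congrArg Prod.fst h
  simpa [redEdgeVert] using this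

lemma Mcov_matching : (H E S).IsMatching (Mcov E S) := by
  constructor
  · intro p hp
    obtain ⟨e, he, rfl⟩ := Finset.mem_image.1 hp
    exact ev_wfun_mem_H_edges E S he
  · intro p hp q hq hne
    obtain ⟨e, he, rfl⟩ := Finset.mem_image.1 hp
    obtain ⟨f, hf, rfl⟩ := Finset.mem_image.1 hq
    have hef : e ≠ f := fun h => hne (by rw [h])
    refine ⟨?_, ?_, ?_, ?_⟩
    · simpa [redEdgeVert] using hef
    · simp [redEdgeVert, wfun, redCopy]
    · simp [redEdgeVert, wfun, redCopy]
    · intro h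
      exact hef (wfun_injOn E S he hf h)

lemma nu_cover (hc : IsVCover E S) : (H E S).nu = E.card := by
  have hESE : ES E S = E := by
    rw [ES, Finset.filter_eq_self]
    exact hc
  refine le_antisymm (nu_le E S fun M hM => matching_card_le_E E S hM) ?_
  have := le_nu E S (Mcov_matching E S)
  rwa [Mcov_card, hESE] at this

lemma nu_noncover (hc : ¬ IsVCover E S) : (H E S).nu = (ES E S).card + 1 := by
  obtain ⟨e₀, he₀E, he₀⟩ := by
    rw [IsVCover] at hc; push_neg at hc; exact hc
  have he₀S : e₀ ∉ ES E S := by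
    rw [mem_ES]
    rintro ⟨_, v, hv1, hv2⟩
    exact he₀ v hv1 hv2
  refine le_antisymm (nu_le E S fun M hM => matching_card_le_ES E S hM) ?_
  set M : Finset (RedVert V × RedVert V) :=
    insert (redAlpha V, redEdgeVert e₀) (Mcov E S) with hMdef
  have hnm : (redAlpha V, redEdgeVert e₀) ∉ Mcov E S := by
    intro h
    obtain ⟨e, _, h⟩ := Finset.mem_image.1 h
    simp [redAlpha, redEdgeVert, Prod.ext_iff] at h
  have hMcard : M.card = (ES E S).card + 1 := by
    rw [hMdef, Finset.card_insert_of_notMem hnm, Mcov_card]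
  have hMm : (H E S).IsMatching M := by
    constructor
    · intro p hp
      rcases Finset.mem_insert.1 hp with rfl | hp
      · exact (mem_H_edges E S).2 (Or.inr ⟨e₀, he₀E, rfl⟩)
      · exact (Mcov_matching E S).1 hp
    · intro p hp q hq hne
      rcases Finset.mem_insert.1 hp with rfl | hp <;> rcases Finset.mem_insert.1 hq with rfl | hq
      · exact absurd rfl hne
      · obtain ⟨f, hf, rfl⟩ := Finset.mem_image.1 hq
        refine ⟨?_, ?_, ?_, ?_⟩
        · simp [redAlpha, redEdgeVert]
        · simp [redAlpha, wfun, redCopy]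
        · simp only [redEdgeVert, Sum.inr.injEq, Sum.inl.injEq, ne_eq]
          intro h; rw [h] at he₀S; exact he₀S hf
        · simp [redEdgeVert, wfun, redCopy]
      · obtain ⟨f, hf, rfl⟩ := Finset.mem_image.1 hp
        refine ⟨?_, ?_, ?_, ?_⟩
        · simp [redAlpha, redEdgeVert]
        · simp only [redEdgeVert, Sum.inr.injEq, Sum.inl.injEq, ne_eq]
          intro h; rw [h] at hf; exact he₀S hf
        · simp [redAlpha, wfun, redCopy]
        · simp [redEdgeVert, wfun, redCopy]
      · exact (Mcov_matching E S).2 p hp q hq hne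
  have := le_nu E S hMm
  rwa [hMcard] at this

end RedAux

namespace RedAux

noncomputable def y1 : RedVert V → ℝ
  | Sum.inl _ => 0
  | Sum.inr (Sum.inl _) => 1
  | Sum.inr (Sum.inr _) => 0

lemma y1_copy (v : V) (j : ℕ) : y1 (redCopy v j) = 0 := rfl
lemma y1_ev (e : Sym2 V) : y1 (redEdgeVert e) = 1 := rfl
lemma y1_alpha : y1 (redAlpha V) = 0 := rfl
lemma y1_nonneg (x : RedVert V) : 0 ≤ y1 x := by
  rcases x with p | (e | i) <;> simp [y1]

variable (E : Finset (Sym2 V)) (S : Finset V)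

noncomputable def y2 : RedVert V → ℝ
  | Sum.inl _ => 0
  | Sum.inr (Sum.inl e) => if ∃ v ∈ S, v ∈ e then 1 else 0
  | Sum.inr (Sum.inr _) => 1

lemma y2_copy (v : V) (j : ℕ) : y2 S (redCopy v j) = 0 := rfl
lemma y2_ev (e : Sym2 V) : y2 S (redEdgeVert e) = if ∃ v ∈ S, v ∈ e then 1 else 0 := rfl
lemma y2_alpha : y2 S (redAlpha V) = 1 := rfl
lemma y2_nonneg (x : RedVert V) : 0 ≤ y2 S x := by
  rcases x with p | (e | i) <;> simp [y2]
  positivity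

lemma y1_mem_core (hc : IsVCover E S) : y1 ∈ (H E S).core := by
  refine ⟨fun v _ => y1_nonneg v, ?_, ?_⟩
  · intro p hp
    rcases (mem_H_edges E S).1 hp with ⟨e, _, v, _, _, j, _, rfl⟩ | ⟨e, _, rfl⟩
    · simp [y1_ev, y1_copy]
    · simp [y1_ev, y1_alpha]
  · rw [H_verts, sum_redPi, nu_cover E S hc]
    have h1 : ∑ x ∈ piCopies E S, y1 x = 0 := by
      refine Finset.sum_eq_zero ?_
      intro x hx
      obtain ⟨v, _, j, _, rfl⟩ := (mem_piCopies E S).1 hx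
      exact y1_copy v j
    simp [h1, y1_ev, y1_alpha]

lemma y2_mem_core (hc : ¬ IsVCover E S) : y2 S ∈ (H E S).core := by
  refine ⟨fun v _ => y2_nonneg S v, ?_, ?_⟩
  · intro p hp
    rcases (mem_H_edges E S).1 hp with ⟨e, _, v, hvS, hv, j, _, rfl⟩ | ⟨e, _, rfl⟩
    · simp only [y2_ev, y2_copy]
      rw [if_pos ⟨v, hvS, hv⟩]
      norm_num
    · simp only [y2_alpha]
      have := y2_nonneg S (redEdgeVert e)
      push_cast
      linarith [y2_nonneg S (redEdgeVert e)]
  · rw [H_verts, sum_redPi, nu_noncover E S hc]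
    have h1 : ∑ x ∈ piCopies E S, y2 S x = 0 := by
      refine Finset.sum_eq_zero ?_
      intro x hx
      obtain ⟨v, _, j, _, rfl⟩ := (mem_piCopies E S).1 hx
      exact y2_copy S v j
    have h2 : ∑ e ∈ E, y2 S (redEdgeVert e) = ((ES E S).card : ℝ) := by
      have : ∀ e ∈ E, y2 S (redEdgeVert e) = if e ∈ ES E S then (1:ℝ) else 0 := by
        intro e he
        by_cases h : ∃ v ∈ S, v ∈ e
        · rw [y2_ev, if_pos h, if_pos ((mem_ES E S).2 ⟨he, h⟩)]
        · rw [y2_ev, if_neg h, if_neg (fun hm => h ((mem_ES E S).1 hm).2)]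
      rw [Finset.sum_congr rfl this, Finset.sum_ite_mem]
      have hsub : E ∩ ES E S = ES E S :=
        Finset.inter_eq_right.2 (Finset.filter_subset _ _)
      rw [hsub, Finset.sum_const, nsmul_eq_mul, mul_one]
    rw [h1, h2, y2_alpha]
    push_cast
    ring

lemma core_key_ineq {y : RedVert V → ℝ} (hy : y ∈ (H E S).core) :
    ((ES E S).card : ℝ) + (∑ e ∈ E.filter (fun e => ¬ ∃ v ∈ S, v ∈ e), y (redEdgeVert e))
      + y (redAlpha V) ≤ ((H E S).nu : ℝ) := by
  obtain ⟨hnn, hcon, hsum⟩ := hy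
  rw [H_verts] at hnn hsum
  rw [sum_redPi] at hsum
  have hsplit : (∑ e ∈ ES E S, y (redEdgeVert e)) +
      (∑ e ∈ E.filter (fun e => ¬ ∃ v ∈ S, v ∈ e), y (redEdgeVert e)) =
      ∑ e ∈ E, y (redEdgeVert e) :=
    Finset.sum_filter_add_sum_filter_not E _ _
  have h1 : ((ES E S).card : ℝ) ≤
      (∑ e ∈ ES E S, y (redEdgeVert e)) + (∑ e ∈ ES E S, y (wfun E S e)) := by
    rw [← Finset.sum_add_distrib]
    calc ((ES E S).card : ℝ) = ∑ _e ∈ ES E S, (1:ℝ) := by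
          rw [Finset.sum_const, nsmul_eq_mul, mul_one]
      _ ≤ _ := Finset.sum_le_sum (fun e he => hcon _ (ev_wfun_mem_H_edges E S he))
  have h2 : (∑ e ∈ ES E S, y (wfun E S e)) ≤ ∑ x ∈ piCopies E S, y x := by
    rw [← Finset.sum_image (g := wfun E S) (f := y)
      (fun e he f hf h => wfun_injOn E S he hf h)]
    refine Finset.sum_le_sum_of_subset_of_nonneg ?_ ?_
    · intro x hx
      obtain ⟨e, he, rfl⟩ := Finset.mem_image.1 hx
      exact wfun_mem_piCopies E S he
    · intro x hx _
      refine hnn x ?_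
      rw [redPi_eq]
      exact Finset.mem_union.2 (Or.inl (Finset.mem_union.2 (Or.inl hx)))
  linarith

lemma alpha_nonpos_of_cover (hc : IsVCover E S) {y : RedVert V → ℝ}
    (hy : y ∈ (H E S).core) : y (redAlpha V) ≤ 0 := by
  have key := core_key_ineq E S hy
  have hESE : ES E S = E := by rw [ES, Finset.filter_eq_self]; exact hc
  have hnn : ∀ e ∈ E.filter (fun e => ¬ ∃ v ∈ S, v ∈ e), 0 ≤ y (redEdgeVert e) := by
    intro e he
    exact hy.1 _ (by rw [H_verts]; exact ev_mem E S (Finset.mem_filter.1 he).1)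
  have h0 : (0:ℝ) ≤ ∑ e ∈ E.filter (fun e => ¬ ∃ v ∈ S, v ∈ e), y (redEdgeVert e) :=
    Finset.sum_nonneg hnn
  rw [nu_cover E S hc, hESE] at key
  linarith

lemma alpha_le_one_of_noncover (hc : ¬ IsVCover E S) {y : RedVert V → ℝ}
    (hy : y ∈ (H E S).core) : y (redAlpha V) ≤ 1 := by
  have key := core_key_ineq E S hy
  obtain ⟨e₀, he₀E, he₀⟩ := by
    rw [IsVCover] at hc; push_neg at hc; exact hc
  have he₀m : e₀ ∈ E.filter (fun e => ¬ ∃ v ∈ S, v ∈ e) := by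
    refine Finset.mem_filter.2 ⟨he₀E, ?_⟩
    rintro ⟨v, hv1, hv2⟩
    exact he₀ v hv1 hv2
  have hnn : ∀ e ∈ E.filter (fun e => ¬ ∃ v ∈ S, v ∈ e), 0 ≤ y (redEdgeVert e) := by
    intro e he
    exact hy.1 _ (by rw [H_verts]; exact ev_mem E S (Finset.mem_filter.1 he).1)
  have h0 : y (redEdgeVert e₀) ≤ ∑ e ∈ E.filter (fun e => ¬ ∃ v ∈ S, v ∈ e), y (redEdgeVert e) :=
    Finset.single_le_sum hnn he₀m
  have h1 : 0 ≤ y (redEdgeVert e₀) := hnn e₀ he₀m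
  rw [nu_noncover E S hc] at key
  push_cast at key
  linarith

lemma sInf_core_eq :
    sInf ((fun y : RedVert V → ℝ => 1 - y (redAlpha V)) ''
        ((redGraph E).induce (redPi E S)).core)
      = if IsVCover E S then (1:ℝ) else 0 := by
  by_cases hc : IsVCover E S
  · rw [if_pos hc]
    refine IsLeast.csInf_eq ⟨⟨y1, y1_mem_core E S hc,
      by show (1:ℝ) - y1 (redAlpha V) = 1; rw [y1_alpha]; ring⟩, ?_⟩
    rintro x ⟨y, hy, rfl⟩
    have h := alpha_nonpos_of_cover E S hc hy
    show (1:ℝ) ≤ 1 - y (redAlpha V)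
    linarith
  · rw [if_neg hc]
    refine IsLeast.csInf_eq ⟨⟨y2 S, y2_mem_core E S hc,
      by show (1:ℝ) - y2 S (redAlpha V) = 0; rw [y2_alpha]; ring⟩, ?_⟩
    rintro x ⟨y, hy, rfl⟩
    have h := alpha_le_one_of_noncover E S hc hy
    show (0:ℝ) ≤ 1 - y (redAlpha V)
    linarith

end RedAux


/-- For any finite simple graph `G = (V, E)`,
`Σ_{S ⊆ V} min_{y ∈ core(G₀[Π(S)])} (1 - y_α)` equals the number of vertex covers of `G`;
equivalently, the expected value of `min_{y ∈ core(G₀[Π(S)])} (1 - y_α)` over a uniformly random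
`S ⊆ V` equals `(number of vertex covers of G) / 2^{|V|}`. -/
theorem redGraph_sum_counts_vertexCovers (E : Finset (Sym2 V)) (hE : ∀ e ∈ E, ¬ e.IsDiag) :
    (∑ S ∈ (Finset.univ : Finset V).powerset,
        sInf ((fun y : RedVert V → ℝ => 1 - y (redAlpha V)) ''
          ((redGraph E).induce (redPi E S)).core))
      = ((Finset.univ : Finset V).powerset.filter fun S => IsVCover E S).card ∧
    (1 / (2 : ℝ) ^ Fintype.card V) * (∑ S ∈ (Finset.univ : Finset V).powerset,
        sInf ((fun y : RedVert V → ℝ => 1 - y (redAlpha V)) ''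
          ((redGraph E).induce (redPi E S)).core))
      = ((Finset.univ : Finset V).powerset.filter fun S => IsVCover E S).card
          / (2 : ℝ) ^ Fintype.card V := by
  have key : (∑ S ∈ (Finset.univ : Finset V).powerset,
      sInf ((fun y : RedVert V → ℝ => 1 - y (redAlpha V)) ''
        ((redGraph E).induce (redPi E S)).core))
      = (((Finset.univ : Finset V).powerset.filter fun S => IsVCover E S).card : ℝ) := by
    rw [Finset.sum_congr rfl (fun S _ => RedAux.sInf_core_eq E S)]
    rw [Finset.sum_boole]
  exact ⟨key, by rw [key]; ring⟩
end

section
/- Every extreme point of the feasible region P_k of the multistage assignment game linear program has all coordinates integral. -/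
open FinGraph

variable {α : Type*}

/-- A point of the multistage LP: stage allocations `y^i` (`i = 0, …, k-1`, zero-based) and
deviation variables `δ^i`, `d^i` (`i = 0, …, k-2`) linking consecutive stages. -/
abbrev MultiStagePt (α : Type*) : Type _ :=
  (ℕ → α → ℝ) × (ℕ → α → ℝ) × (ℕ → α → ℝ)

/-- The relaxed feasible region `D_k` of the multistage LP (no matching-number equalities). -/
def regionDk [DecidableEq α] (k : ℕ) (G : ℕ → FinGraph α) :
    Set (MultiStagePt α) :=
  {p | (∀ i < k, (∀ v ∈ (G i).verts, 0 ≤ p.1 i v) ∧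
         (∀ e ∈ (G i).edges, 1 ≤ p.1 i e.1 + p.1 i e.2)) ∧
       (∀ i, i + 1 < k → ∀ v ∈ (G i).verts ∩ (G (i + 1)).verts,
         p.1 i v - p.1 (i + 1) v ≤ p.2.1 i v ∧
         p.1 (i + 1) v - p.1 i v ≤ p.2.2 i v ∧
         0 ≤ p.2.1 i v ∧ 0 ≤ p.2.2 i v)}

/-- The feasible region `P_k` of the multistage LP: `D_k` together with the matching-number
equalities. -/
noncomputable def regionPk [DecidableEq α] (k : ℕ) (G : ℕ → FinGraph α) :
    Set (MultiStagePt α) :=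
  {p ∈ regionDk k G | ∀ i < k, ∑ v ∈ (G i).verts, p.1 i v = ((G i).nu : ℝ)}

/-- The multistage dual-flow polyhedron `Q_k`: points of `D_k` extended by potentials `γ^i`. -/
def regionQk [DecidableEq α] (k : ℕ) (G : ℕ → FinGraph α) (Vs Vt : Finset α) :
    Set (MultiStagePt α × (ℕ → α → ℝ)) :=
  {q | (∀ i < k, ∀ v ∈ (G i).verts ∩ Vs, 1 ≤ q.2 i v + q.1.1 i v) ∧
       (∀ i, i + 1 < k → ∀ v ∈ ((G i).verts ∩ (G (i + 1)).verts) ∩ Vs,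
          0 ≤ q.2 i v - q.2 (i + 1) v + q.1.2.1 i v ∧
          0 ≤ q.2 (i + 1) v - q.2 i v + q.1.2.2 i v) ∧
       (∀ i < k, ∀ e ∈ (G i).edges, e.1 ∈ Vs → e.2 ∈ Vt →
          0 ≤ q.2 i e.2 - q.2 i e.1) ∧
       (∀ i < k, ∀ v ∈ (G i).verts ∩ Vt, 0 ≤ q.1.1 i v - q.2 i v) ∧
       (∀ i, i + 1 < k → ∀ v ∈ ((G i).verts ∩ (G (i + 1)).verts) ∩ Vt,
          0 ≤ q.2 (i + 1) v - q.2 i v + q.1.2.1 i v ∧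
          0 ≤ q.2 i v - q.2 (i + 1) v + q.1.2.2 i v) ∧
       (∀ i < k, ∀ v ∈ (G i).verts, 0 ≤ q.1.1 i v) ∧
       (∀ i, i + 1 < k → ∀ v ∈ (G i).verts ∩ (G (i + 1)).verts,
          0 ≤ q.1.2.1 i v ∧ 0 ≤ q.1.2.2 i v)}

/-- A linear objective on the multistage variables `(y^i, δ^i, d^i)`, with coefficient functions
`cy`, `cδ`, `cd`. -/
def objCk [DecidableEq α] (k : ℕ) (G : ℕ → FinGraph α)
    (cy cδ cd : ℕ → α → ℝ) (p : MultiStagePt α) : ℝ :=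
  ∑ i ∈ Finset.range k, ∑ v ∈ (G i).verts, cy i v * p.1 i v
    + ∑ i ∈ Finset.range (k - 1), ∑ v ∈ (G i).verts ∩ (G (i + 1)).verts,
        (cδ i v * p.2.1 i v + cd i v * p.2.2 i v)

/-- The feasible region of the multistage LP, embedded in the ambient product space by requiring
all variables to vanish outside their index sets (`y^i ∈ ℝ^{V_i}` for `i < k`,
`δ^i, d^i ∈ ℝ^{V_i ∩ V_{i+1}}` for `i + 1 < k`). -/
noncomputable def regionPkEmb [DecidableEq α] (k : ℕ) (G : ℕ → FinGraph α) :
    Set (MultiStagePt α) :=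
  {p ∈ regionPk k G |
    (∀ i v, ¬(i < k ∧ v ∈ (G i).verts) → p.1 i v = 0) ∧
    (∀ i v, ¬(i + 1 < k ∧ v ∈ (G i).verts ∩ (G (i + 1)).verts) →
        p.2.1 i v = 0 ∧ p.2.2 i v = 0)}

section MSAux

open FinGraph Finset

variable {α : Type*}

lemma MS_integral_zero : IntegralReal 0 := ⟨0, by simp⟩

lemma MS_integral_partner {a b : ℝ} (hab : a + b = 1) (ha : ¬ IntegralReal a) :
    ¬ IntegralReal b := by
  rintro ⟨n, rfl⟩
  exact ha ⟨1 - n, by push_cast; linarith⟩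

lemma MS_compl_slack [DecidableEq α] (H : FinGraph α) (hwf : H.WF) (y : α → ℝ)
    (h0 : ∀ v ∈ H.verts, 0 ≤ y v) (h1 : ∀ e ∈ H.edges, 1 ≤ y e.1 + y e.2)
    (hs : ∑ v ∈ H.verts, y v = (H.nu : ℝ)) :
    ∃ M : Finset (α × α), H.IsMatching M ∧ (∀ e ∈ M, y e.1 + y e.2 = 1) ∧
      ∀ v ∈ H.verts, (∀ e ∈ M, v ≠ e.1 ∧ v ≠ e.2) → y v = 0 := by
  classical
  have hne : (H.edges.powerset.filter fun M => H.IsMatching M).Nonempty := by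
    refine ⟨∅, ?_⟩
    simp [Finset.mem_filter, IsMatching]
  obtain ⟨M, hMmem, hMcard⟩ := Finset.exists_mem_eq_sup _ hne Finset.card
  rw [Finset.mem_filter] at hMmem
  have hM : H.IsMatching M := hMmem.2
  have hMsub : M ⊆ H.edges := hM.1
  set N : Finset α := M.biUnion (fun e => {e.1, e.2}) with hN
  have hdisj : ∀ e ∈ M, ∀ f ∈ M, e ≠ f →
      Disjoint ({e.1, e.2} : Finset α) {f.1, f.2} := by
    intro e he f hf hef
    obtain ⟨h1', h2', h3', h4'⟩ := hM.2 e he f hf hef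
    simp [Finset.disjoint_left]
    tauto
  have hsumN : ∑ v ∈ N, y v = ∑ e ∈ M, (y e.1 + y e.2) := by
    rw [hN, Finset.sum_biUnion]
    · refine Finset.sum_congr rfl fun e he => ?_
      have hne12 : e.1 ≠ e.2 := (hwf e (hMsub he)).2.2
      rw [Finset.sum_pair hne12]
    · intro e he f hf hef
      exact hdisj e he f hf hef
  have hNsub : N ⊆ H.verts := by
    intro v hv
    rw [hN, Finset.mem_biUnion] at hv
    obtain ⟨e, he, hv⟩ := hv
    have := hwf e (hMsub he)
    simp at hv
    rcases hv with rfl | rfl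
    · exact this.1
    · exact this.2.1
  have hcard_le : (M.card : ℝ) ≤ ∑ e ∈ M, (y e.1 + y e.2) := by
    calc (M.card : ℝ) = ∑ _e ∈ M, (1:ℝ) := by simp
    _ ≤ _ := Finset.sum_le_sum fun e he => h1 e (hMsub he)
  have hsum_le : ∑ v ∈ N, y v ≤ ∑ v ∈ H.verts, y v :=
    Finset.sum_le_sum_of_subset_of_nonneg hNsub (fun v hv _ => h0 v hv)
  have hnu_eq : (H.nu:ℝ) = (M.card : ℝ) := by
    have : H.nu = M.card := hMcard
    exact_mod_cast this
  have hall : ∑ e ∈ M, (y e.1 + y e.2) = (M.card : ℝ) ∧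
      ∑ v ∈ N, y v = ∑ v ∈ H.verts, y v := by
    constructor <;> linarith [hcard_le, hsum_le, hsumN, hs, hnu_eq]
  have htight : ∀ e ∈ M, y e.1 + y e.2 = 1 := by
    intro e he
    have h := Finset.sum_eq_zero_iff_of_nonneg
      (s := M) (f := fun e => y e.1 + y e.2 - 1)
      (fun e he => by linarith [h1 e (hMsub he)])
    have hz : ∑ e ∈ M, (y e.1 + y e.2 - 1) = 0 := by
      rw [Finset.sum_sub_distrib]
      simp [hall.1]
    have := (h.mp hz) e he
    linarith
  refine ⟨M, hM, htight, ?_⟩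
  intro v hv hnm
  have hvN : v ∉ N := by
    rw [hN, Finset.mem_biUnion]
    rintro ⟨e, he, hv'⟩
    simp at hv'
    rcases hv' with rfl | rfl
    · exact (hnm e he).1 rfl
    · exact (hnm e he).2 rfl
  have hz : ∑ v ∈ H.verts \ N, y v = 0 := by
    have := Finset.sum_sdiff (f := y) hNsub
    linarith [hall.2]
  exact (Finset.sum_eq_zero_iff_of_nonneg
    (fun u hu => h0 u (Finset.mem_sdiff.mp hu).1)).mp hz v
    (Finset.mem_sdiff.mpr ⟨hv, hvN⟩)

variable (k : ℕ) (G : ℕ → FinGraph α) (y : ℕ → α → ℝ)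

/-- A fractional node of the multistage LP. -/
def MSFrac (q : ℕ × α) : Prop :=
  q.1 < k ∧ q.2 ∈ (G q.1).verts ∧ ¬ IntegralReal (y q.1 q.2)

/-- Adjacency in the auxiliary graph linking fractional nodes: tight within-stage edges
and equal-value vertical links. -/
def MSAdj (q r : ℕ × α) : Prop :=
  MSFrac k G y q ∧ MSFrac k G y r ∧
  ((q.1 = r.1 ∧ ((q.2, r.2) ∈ (G q.1).edges ∨ (r.2, q.2) ∈ (G q.1).edges) ∧
      y q.1 q.2 + y q.1 r.2 = 1) ∨
   (q.2 = r.2 ∧ (r.1 = q.1 + 1 ∨ q.1 = r.1 + 1) ∧ y q.1 q.2 = y r.1 r.2))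

lemma MSAdj_symm {q r : ℕ × α} (h : MSAdj k G y q r) : MSAdj k G y r q := by
  obtain ⟨hq, hr, hor⟩ := h
  refine ⟨hr, hq, ?_⟩
  rcases hor with ⟨h1, h2, h3⟩ | ⟨h1, h2, h3⟩
  · exact Or.inl ⟨h1.symm, by rw [← h1]; tauto, by rw [← h1]; linarith⟩
  · exact Or.inr ⟨h1.symm, h2.symm, h3.symm⟩

variable {k G y}

lemma MS_comp_frac {q0 : ℕ × α} (hq0 : MSFrac k G y q0) {q : ℕ × α}
    (h : Relation.ReflTransGen (MSAdj k G y) q0 q) : MSFrac k G y q := by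
  induction h with
  | refl => exact hq0
  | tail _ hadj _ => exact hadj.2.1

/-- Per-stage balance: the perturbation direction sums to zero on each stage. -/
lemma MS_stage_sum_zero [DecidableEq α] (Vs Vt : Finset α) (hdisj : Disjoint Vs Vt)
    {j : ℕ} (hj : j < k) (hwf : (G j).WF) (hbip : (G j).Bipartition Vs Vt)
    (C : Set (ℕ × α))
    (hCfrac : ∀ q ∈ C, MSFrac k G y q)
    (hCcl : ∀ q ∈ C, ∀ r, MSAdj k G y q r → r ∈ C)
    (M : Finset (α × α)) (hM : (G j).IsMatching M)
    (htight : ∀ e ∈ M, y j e.1 + y j e.2 = 1)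
    (hzero : ∀ v ∈ (G j).verts, (∀ e ∈ M, v ≠ e.1 ∧ v ≠ e.2) → y j v = 0)
    (z : α → ℝ)
    (hz1 : ∀ v, (j, v) ∈ C → z v = (if v ∈ Vs then (1:ℝ) else -1))
    (hz0 : ∀ v, (j, v) ∉ C → z v = 0) :
    ∑ v ∈ (G j).verts, z v = 0 := by
  classical
  have hedge : ∀ e ∈ M, e.1 ∈ Vs ∧ e.2 ∈ Vt ∧ e.1 ∈ (G j).verts ∧
      e.2 ∈ (G j).verts := by
    intro e he
    obtain ⟨h1, h2⟩ := hbip.2 e (hM.1 he)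
    obtain ⟨h3, h4, _⟩ := hwf e (hM.1 he)
    exact ⟨h1, h2, h3, h4⟩
  have hMC : ∀ e ∈ M, ((j, e.1) ∈ C ↔ (j, e.2) ∈ C) := by
    intro e he
    have ht := htight e he
    have hE : e ∈ (G j).edges := hM.1 he
    have hEE : ((e.1 : α), (e.2 : α)) ∈ (G j).edges := hE
    constructor
    · intro h1
      have hf1 := hCfrac _ h1
      have hf2 : MSFrac k G y (j, e.2) :=
        ⟨hj, (hedge e he).2.2.2, MS_integral_partner ht hf1.2.2⟩
      exact hCcl _ h1 _ ⟨hf1, hf2, Or.inl ⟨rfl, Or.inl hEE, ht⟩⟩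
    · intro h2
      have hf2 := hCfrac _ h2
      have hf1 : MSFrac k G y (j, e.1) :=
        ⟨hj, (hedge e he).2.2.1, MS_integral_partner (by linarith) hf2.2.2⟩
      exact hCcl _ h2 _ ⟨hf2, hf1, Or.inl ⟨rfl, Or.inr hEE, by linarith⟩⟩
  have hmatched : ∀ u ∈ (G j).verts, (j, u) ∈ C → ∃ e ∈ M, u = e.1 ∨ u = e.2 := by
    intro u hu huC
    by_contra hcon
    push_neg at hcon
    have : y j u = 0 := hzero u hu fun e he => hcon e he
    exact (hCfrac _ huC).2.2 (this ▸ MS_integral_zero)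
  set Cj : Finset α := (G j).verts.filter (fun v => (j, v) ∈ C) with hCj
  set P : Finset (α × α) := M.filter (fun e => (j, e.1) ∈ C) with hP
  have hA : Cj.filter (· ∈ Vs) = P.image Prod.fst := by
    ext u
    simp only [hCj, hP, Finset.mem_filter, Finset.mem_image]
    constructor
    · rintro ⟨⟨hu, huC⟩, huVs⟩
      obtain ⟨e, he, heq⟩ := hmatched u hu huC
      rcases heq with rfl | rfl
      · exact ⟨e, ⟨he, huC⟩, rfl⟩
      · exact absurd ((hedge e he).2.1) (fun h => hdisj.forall_ne_finset huVs h rfl)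
    · rintro ⟨e, ⟨he, heC⟩, rfl⟩
      exact ⟨⟨(hedge e he).2.2.1, heC⟩, (hedge e he).1⟩
  have hB : Cj.filter (· ∉ Vs) = P.image Prod.snd := by
    ext u
    simp only [hCj, hP, Finset.mem_filter, Finset.mem_image]
    constructor
    · rintro ⟨⟨hu, huC⟩, huVs⟩
      obtain ⟨e, he, heq⟩ := hmatched u hu huC
      rcases heq with rfl | rfl
      · exact absurd ((hedge e he).1) huVs
      · exact ⟨e, ⟨he, (hMC e he).2 huC⟩, rfl⟩
    · rintro ⟨e, ⟨he, heC⟩, rfl⟩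
      refine ⟨⟨(hedge e he).2.2.2, (hMC e he).1 heC⟩, ?_⟩
      exact fun h => hdisj.forall_ne_finset h ((hedge e he).2.1) rfl
  have hcard : (Cj.filter (· ∈ Vs)).card = (Cj.filter (· ∉ Vs)).card := by
    rw [hA, hB, Finset.card_image_of_injOn, Finset.card_image_of_injOn]
    · intro e he f hf hef
      by_contra hne
      exact ((hM.2 e (Finset.mem_filter.mp he).1 f (Finset.mem_filter.mp hf).1
        hne).2.2.2) hef
    · intro e he f hf hef
      by_contra hne
      exact ((hM.2 e (Finset.mem_filter.mp he).1 f (Finset.mem_filter.mp hf).1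
        hne).1) hef
  calc ∑ v ∈ (G j).verts, z v
      = ∑ v ∈ (G j).verts,
        (if (j, v) ∈ C then (if v ∈ Vs then (1:ℝ) else -1) else 0) := by
        refine Finset.sum_congr rfl fun v hv => ?_
        by_cases h : (j, v) ∈ C
        · rw [hz1 v h, if_pos h]
        · rw [hz0 v h, if_neg h]
    _ = ∑ v ∈ Cj, (if v ∈ Vs then (1:ℝ) else -1) := by
        rw [hCj, Finset.sum_filter]
    _ = 0 := by
        rw [Finset.sum_ite, Finset.sum_const, Finset.sum_const, hcard]
        simp

/-- Perturbation of a multistage point along a direction. -/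
def MSpert (p : MultiStagePt α) (zy zδ zd : ℕ → α → ℝ) (t : ℝ) : MultiStagePt α :=
  (fun j u => p.1 j u + t * zy j u,
   fun j u => p.2.1 j u + t * zδ j u,
   fun j u => p.2.2 j u + t * zd j u)

lemma MS_extreme_pert_zero {S : Set (MultiStagePt α)} {p : MultiStagePt α}
    (hp : p ∈ Set.extremePoints ℝ S) (zy zδ zd : ℕ → α → ℝ) {ρ : ℝ} (hρ : ρ ≠ 0)
    (h1 : MSpert p zy zδ zd ρ ∈ S) (h2 : MSpert p zy zδ zd (-ρ) ∈ S) :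
    ∀ j u, zy j u = 0 ∧ zδ j u = 0 ∧ zd j u = 0 := by
  have hseg : p ∈ openSegment ℝ (MSpert p zy zδ zd ρ) (MSpert p zy zδ zd (-ρ)) := by
    refine ⟨1/2, 1/2, by norm_num, by norm_num, by norm_num, ?_⟩
    refine Prod.ext ?_ (Prod.ext ?_ ?_) <;>
      · funext j u
        simp [MSpert, Prod.smul_def, Pi.smul_apply, smul_eq_mul]
        ring
  have heq := hp.2 h1 h2 hseg
  intro j u
  refine ⟨?_, ?_, ?_⟩
  · have := congrFun (congrFun (congrArg (fun q : MultiStagePt α => q.1) heq) j) u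
    simp only [MSpert] at this
    have : ρ * zy j u = 0 := by linarith
    exact (mul_eq_zero.mp this).resolve_left hρ
  · have := congrFun (congrFun (congrArg (fun q : MultiStagePt α => q.2.1) heq) j) u
    simp only [MSpert] at this
    have : ρ * zδ j u = 0 := by linarith
    exact (mul_eq_zero.mp this).resolve_left hρ
  · have := congrFun (congrFun (congrArg (fun q : MultiStagePt α => q.2.2) heq) j) u
    simp only [MSpert] at this
    have : ρ * zd j u = 0 := by linarith
    exact (mul_eq_zero.mp this).resolve_left hρ

lemma MS_mem_regionPkEmb_iff [DecidableEq α] {k : ℕ} {G : ℕ → FinGraph α}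
    {q : MultiStagePt α} :
    q ∈ regionPkEmb k G ↔
      ((∀ i < k, (∀ v ∈ (G i).verts, 0 ≤ q.1 i v) ∧
          (∀ e ∈ (G i).edges, 1 ≤ q.1 i e.1 + q.1 i e.2)) ∧
       (∀ i, i + 1 < k → ∀ v ∈ (G i).verts ∩ (G (i + 1)).verts,
          q.1 i v - q.1 (i + 1) v ≤ q.2.1 i v ∧
          q.1 (i + 1) v - q.1 i v ≤ q.2.2 i v ∧
          0 ≤ q.2.1 i v ∧ 0 ≤ q.2.2 i v)) ∧
      (∀ i < k, ∑ v ∈ (G i).verts, q.1 i v = ((G i).nu : ℝ)) ∧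
      (∀ i v, ¬(i < k ∧ v ∈ (G i).verts) → q.1 i v = 0) ∧
      (∀ i v, ¬(i + 1 < k ∧ v ∈ (G i).verts ∩ (G (i + 1)).verts) →
          q.2.1 i v = 0 ∧ q.2.2 i v = 0) := by
  simp only [regionPkEmb, regionPk, regionDk, Set.mem_setOf_eq]
  tauto

end MSAux
/-- Every extreme point of the feasible region `P_k` of the multistage
assignment game LP has all coordinates integral. -/
theorem extremePoints_regionPk_integral [DecidableEq α]
    (k : ℕ) (hk : 1 ≤ k) (G : ℕ → FinGraph α) (Vs Vt : Finset α)
    (hdisj : Disjoint Vs Vt)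
    (hWF : ∀ i < k, (G i).WF) (hbip : ∀ i < k, (G i).Bipartition Vs Vt)
    (p : MultiStagePt α)
    (hp : p ∈ Set.extremePoints ℝ (regionPkEmb k G)) :
    (∀ i v, IntegralReal (p.1 i v)) ∧ (∀ i v, IntegralReal (p.2.1 i v)) ∧
    (∀ i v, IntegralReal (p.2.2 i v)) := by
  classical
  have hpS := hp.1
  rw [MS_mem_regionPkEmb_iff] at hpS
  obtain ⟨⟨hDk1, hDk2⟩, hsum, hEmbY, hEmbD⟩ := hpS
  -- maximum matchings and complementary slackness per stage
  have hmatch : ∀ j, j < k → ∃ M, (G j).IsMatching M ∧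
      (∀ e ∈ M, p.1 j e.1 + p.1 j e.2 = 1) ∧
      ∀ v ∈ (G j).verts, (∀ e ∈ M, v ≠ e.1 ∧ v ≠ e.2) → p.1 j v = 0 :=
    fun j hj => MS_compl_slack (G j) (hWF j hj) (p.1 j)
      ((hDk1 j hj).1) ((hDk1 j hj).2) (hsum j hj)
  choose Mf hMf1 hMf2 hMf3 using hmatch
  ---------------------------------------------------------------
  -- STEP A : all stage allocations are integral
  ---------------------------------------------------------------
  have hyInt : ∀ i v, IntegralReal (p.1 i v) := by
    by_contra hcon
    push_neg at hcon
    obtain ⟨i, v, hiv⟩ := hcon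
    have hval : i < k ∧ v ∈ (G i).verts := by
      by_contra h
      exact hiv (hEmbY i v h ▸ MS_integral_zero)
    have hfrac : MSFrac k G p.1 (i, v) := ⟨hval.1, hval.2, hiv⟩
    set C : Set (ℕ × α) := {q | Relation.ReflTransGen (MSAdj k G p.1) (i, v) q}
      with hC
    have hCfrac : ∀ q ∈ C, MSFrac k G p.1 q := fun q hq => MS_comp_frac hfrac hq
    have hCcl : ∀ q ∈ C, ∀ r, MSAdj k G p.1 q r → r ∈ C :=
      fun q hq r h => Relation.ReflTransGen.tail hq h
    have hCiff : ∀ q r, MSAdj k G p.1 q r → ((q ∈ C) ↔ (r ∈ C)) :=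
      fun q r h => ⟨fun hq => hCcl q hq r h,
        fun hr => hCcl r hr q (MSAdj_symm k G p.1 h)⟩
    -- the perturbation direction
    set zy : ℕ → α → ℝ :=
      fun j u => if (j, u) ∈ C then (if u ∈ Vs then 1 else -1) else 0 with hzy
    set zδ : ℕ → α → ℝ :=
      fun j u => if (j + 1 < k ∧ u ∈ (G j).verts ∩ (G (j + 1)).verts) ∧
          p.1 (j + 1) u < p.1 j u then zy j u - zy (j + 1) u else 0 with hzδ
    set zd : ℕ → α → ℝ :=
      fun j u => if (j + 1 < k ∧ u ∈ (G j).verts ∩ (G (j + 1)).verts) ∧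
          p.1 j u < p.1 (j + 1) u then zy (j + 1) u - zy j u else 0 with hzd
    have hzybound : ∀ j u, |zy j u| ≤ 1 := by
      intro j u
      simp only [hzy]
      split_ifs <;> simp
    have hyposC : ∀ j u, (j, u) ∈ C → 0 < p.1 j u := by
      intro j u h
      have hf := hCfrac _ h
      rcases ((hDk1 j hf.1).1 u hf.2.1).lt_or_eq with h' | h'
      · exact h'
      · exact absurd (h' ▸ MS_integral_zero) hf.2.2
    -- vertical coherence
    have hLvert : ∀ j u, j + 1 < k → u ∈ (G j).verts ∩ (G (j + 1)).verts →
        p.1 j u = p.1 (j + 1) u → zy j u = zy (j + 1) u := by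
      intro j u hj1 hu heq
      have hum := Finset.mem_inter.mp hu
      by_cases hI : IntegralReal (p.1 j u)
      · have h1 : (j, u) ∉ C := fun h => (hCfrac _ h).2.2 hI
        have h2 : (j + 1, u) ∉ C := fun h => (hCfrac _ h).2.2 (heq ▸ hI)
        simp [hzy, h1, h2]
      · have hAdj : MSAdj k G p.1 (j, u) (j + 1, u) :=
          ⟨⟨Nat.lt_of_succ_lt hj1, hum.1, hI⟩, ⟨hj1, hum.2, fun h => hI (heq ▸ h)⟩,
            Or.inr ⟨rfl, Or.inl rfl, heq⟩⟩
        have hiff := hCiff _ _ hAdj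
        by_cases hCj : (j, u) ∈ C
        · have := hiff.mp hCj
          simp [hzy, hCj, this]
        · have h2 : (j + 1, u) ∉ C := fun h => hCj (hiff.mpr h)
          simp [hzy, hCj, h2]
    -- tight edge coherence
    have hLedge : ∀ j, j < k → ∀ e ∈ (G j).edges,
        p.1 j e.1 + p.1 j e.2 = 1 → zy j e.1 + zy j e.2 = 0 := by
      intro j hj e he htight
      obtain ⟨hv1, hv2, -⟩ := hWF j hj e he
      obtain ⟨hs1, hs2⟩ := (hbip j hj).2 e he
      by_cases hI : IntegralReal (p.1 j e.1)
      · have hI2 : IntegralReal (p.1 j e.2) := by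
          by_contra h
          exact (MS_integral_partner (by linarith : p.1 j e.2 + p.1 j e.1 = 1) h) hI
        have h1 : (j, e.1) ∉ C := fun h => (hCfrac _ h).2.2 hI
        have h2 : (j, e.2) ∉ C := fun h => (hCfrac _ h).2.2 hI2
        simp [hzy, h1, h2]
      · have hI2 : ¬ IntegralReal (p.1 j e.2) := MS_integral_partner htight hI
        have hEE : ((e.1 : α), (e.2 : α)) ∈ (G j).edges := he
        have hAdj : MSAdj k G p.1 (j, e.1) (j, e.2) :=
          ⟨⟨hj, hv1, hI⟩, ⟨hj, hv2, hI2⟩, Or.inl ⟨rfl, Or.inl hEE, htight⟩⟩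
        have hiff := hCiff _ _ hAdj
        by_cases hCj : (j, e.1) ∈ C
        · have hC2 := hiff.mp hCj
          have hnVs : e.2 ∉ Vs := fun h => (Finset.disjoint_left.mp hdisj h) hs2
          simp [hzy, hCj, hC2, hs1, hnVs]
        · have h2 : (j, e.2) ∉ C := fun h => hCj (hiff.mpr h)
          simp [hzy, hCj, h2]
    -- the finite list of critical slacks
    set F : Finset ℝ := insert 1 ((Finset.range k).biUnion fun j =>
      ((G j).verts.image fun u => p.1 j u) ∪
      ((G j).edges.image fun e => p.1 j e.1 + p.1 j e.2 - 1) ∪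
      (((G j).verts ∩ (G (j + 1)).verts).image fun u => p.2.1 j u) ∪
      (((G j).verts ∩ (G (j + 1)).verts).image fun u => p.2.2 j u) ∪
      (((G j).verts ∩ (G (j + 1)).verts).image fun u =>
        p.2.1 j u - (p.1 j u - p.1 (j + 1) u)) ∪
      (((G j).verts ∩ (G (j + 1)).verts).image fun u =>
        p.2.2 j u - (p.1 (j + 1) u - p.1 j u))) with hF
    have hFmem : ∀ j, j < k → ∀ x : ℝ,
        (x ∈ ((G j).verts.image fun u => p.1 j u) ∪
          ((G j).edges.image fun e => p.1 j e.1 + p.1 j e.2 - 1) ∪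
          (((G j).verts ∩ (G (j + 1)).verts).image fun u => p.2.1 j u) ∪
          (((G j).verts ∩ (G (j + 1)).verts).image fun u => p.2.2 j u) ∪
          (((G j).verts ∩ (G (j + 1)).verts).image fun u =>
            p.2.1 j u - (p.1 j u - p.1 (j + 1) u)) ∪
          (((G j).verts ∩ (G (j + 1)).verts).image fun u =>
            p.2.2 j u - (p.1 (j + 1) u - p.1 j u))) → x ∈ F := by
      intro j hj x hx
      exact Finset.mem_insert_of_mem
        (Finset.mem_biUnion.mpr ⟨j, Finset.mem_range.mpr hj, hx⟩)
    have hF1 : ∀ j, j < k → ∀ u ∈ (G j).verts, p.1 j u ∈ F := fun j hj u hu =>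
      hFmem j hj _ (Finset.mem_union_left _ (Finset.mem_union_left _
        (Finset.mem_union_left _ (Finset.mem_union_left _ (Finset.mem_union_left _
          (Finset.mem_image_of_mem _ hu))))))
    have hF2 : ∀ j, j < k → ∀ e ∈ (G j).edges,
        p.1 j e.1 + p.1 j e.2 - 1 ∈ F := fun j hj e he =>
      hFmem j hj _ (Finset.mem_union_left _ (Finset.mem_union_left _
        (Finset.mem_union_left _ (Finset.mem_union_left _ (Finset.mem_union_right _
          (Finset.mem_image_of_mem _ he))))))
    have hF3 : ∀ j, j < k → ∀ u ∈ (G j).verts ∩ (G (j + 1)).verts,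
        p.2.1 j u ∈ F := fun j hj u hu =>
      hFmem j hj _ (Finset.mem_union_left _ (Finset.mem_union_left _
        (Finset.mem_union_left _ (Finset.mem_union_right _
          (Finset.mem_image_of_mem _ hu)))))
    have hF4 : ∀ j, j < k → ∀ u ∈ (G j).verts ∩ (G (j + 1)).verts,
        p.2.2 j u ∈ F := fun j hj u hu =>
      hFmem j hj _ (Finset.mem_union_left _ (Finset.mem_union_left _
        (Finset.mem_union_right _ (Finset.mem_image_of_mem _ hu))))
    have hF5 : ∀ j, j < k → ∀ u ∈ (G j).verts ∩ (G (j + 1)).verts,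
        p.2.1 j u - (p.1 j u - p.1 (j + 1) u) ∈ F := fun j hj u hu =>
      hFmem j hj _ (Finset.mem_union_left _ (Finset.mem_union_right _
        (Finset.mem_image_of_mem _ hu)))
    have hF6 : ∀ j, j < k → ∀ u ∈ (G j).verts ∩ (G (j + 1)).verts,
        p.2.2 j u - (p.1 (j + 1) u - p.1 j u) ∈ F := fun j hj u hu =>
      hFmem j hj _ (Finset.mem_union_right _ (Finset.mem_image_of_mem _ hu))
    -- ε
    have hFne : (F.filter (fun x => 0 < x)).Nonempty :=
      ⟨1, Finset.mem_filter.mpr ⟨Finset.mem_insert_self _ _, one_pos⟩⟩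
    set ε : ℝ := (F.filter (fun x => 0 < x)).min' hFne with hε
    have hεpos : 0 < ε := (Finset.mem_filter.mp
      ((F.filter (fun x => 0 < x)).min'_mem hFne)).2
    have hεle : ∀ x ∈ F, 0 < x → ε ≤ x := fun x hx hpos =>
      Finset.min'_le _ _ (Finset.mem_filter.mpr ⟨hx, hpos⟩)
    -- feasibility of the perturbed points
    have hfeas : ∀ t : ℝ, |t| ≤ ε / 2 → MSpert p zy zδ zd t ∈ regionPkEmb k G := by
      intro t ht
      have hbnd : ∀ j u, |t * zy j u| ≤ ε / 2 := by
        intro j u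
        rw [abs_mul]
        calc |t| * |zy j u| ≤ (ε / 2) * 1 :=
              mul_le_mul ht (hzybound j u) (abs_nonneg _) (by positivity)
          _ = ε / 2 := mul_one _
      rw [MS_mem_regionPkEmb_iff]
      refine ⟨⟨?_, ?_⟩, ?_, ?_, ?_⟩
      · -- nonnegativity and cover constraints
        intro j hj
        constructor
        · intro u hu
          show 0 ≤ p.1 j u + t * zy j u
          by_cases hCj : (j, u) ∈ C
          · have hy := hyposC j u hCj
            have hle := hεle _ (hF1 j hj u hu) hy
            have := (abs_le.mp (hbnd j u)).1
            linarith
          · have : zy j u = 0 := by simp [hzy, hCj]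
            rw [this, mul_zero, add_zero]
            exact (hDk1 j hj).1 u hu
        · intro e he
          show 1 ≤ (p.1 j e.1 + t * zy j e.1) + (p.1 j e.2 + t * zy j e.2)
          have hbase := (hDk1 j hj).2 e he
          rcases eq_or_lt_of_le hbase with heq | hlt
          · have hz0 := hLedge j hj e he heq.symm
            have hzz : t * zy j e.1 + t * zy j e.2 = 0 := by
              calc t * zy j e.1 + t * zy j e.2 = t * (zy j e.1 + zy j e.2) := by ring
                _ = 0 := by rw [hz0, mul_zero]
            linarith
          · have hle := hεle _ (hF2 j hj e he) (by linarith)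
            have h1 := (abs_le.mp (hbnd j e.1)).1
            have h2 := (abs_le.mp (hbnd j e.2)).1
            linarith
      · -- the deviation constraints
        intro j hj1 u hu
        obtain ⟨ha1, hb1, hδ0, hd0⟩ := hDk2 j hj1 u hu
        have hj : j < k := Nat.lt_of_succ_lt hj1
        have hbnda := abs_le.mp (hbnd j u)
        have hbndb := abs_le.mp (hbnd (j + 1) u)
        refine ⟨?_, ?_, ?_, ?_⟩
        · -- y_j - y_{j+1} ≤ δ
          show (p.1 j u + t * zy j u) - (p.1 (j + 1) u + t * zy (j + 1) u) ≤
            p.2.1 j u + t * zδ j u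
          rcases lt_trichotomy (p.1 j u) (p.1 (j + 1) u) with hlt | heqc | hgt
          · have hz0 : zδ j u = 0 := by
              simp only [hzδ]
              rw [if_neg]
              rintro ⟨-, h⟩
              exact absurd hlt (not_lt.mpr h.le)
            have hle := hεle _ (hF5 j hj u hu) (by linarith)
            rw [hz0, mul_zero, add_zero]
            linarith
          · have hz1 := hLvert j u hj1 hu heqc
            have hz0 : zδ j u = 0 := by
              simp only [hzδ]
              rw [if_neg]
              rintro ⟨-, h⟩
              exact absurd heqc (ne_of_gt h)
            have : t * zy j u = t * zy (j + 1) u := by rw [hz1]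
            rw [hz0, mul_zero, add_zero]
            linarith
          · have hz1 : zδ j u = zy j u - zy (j + 1) u := by
              simp only [hzδ]
              rw [if_pos ⟨⟨hj1, hu⟩, hgt⟩]
            have : t * (zy j u - zy (j + 1) u) = t * zy j u - t * zy (j + 1) u := by
              ring
            rw [hz1]
            linarith
        · -- y_{j+1} - y_j ≤ d
          show (p.1 (j + 1) u + t * zy (j + 1) u) - (p.1 j u + t * zy j u) ≤
            p.2.2 j u + t * zd j u
          rcases lt_trichotomy (p.1 j u) (p.1 (j + 1) u) with hlt | heqc | hgt
          · have hz1 : zd j u = zy (j + 1) u - zy j u := by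
              simp only [hzd]
              rw [if_pos ⟨⟨hj1, hu⟩, hlt⟩]
            have : t * (zy (j + 1) u - zy j u) = t * zy (j + 1) u - t * zy j u := by
              ring
            rw [hz1]
            linarith
          · have hz1 := hLvert j u hj1 hu heqc
            have hz0 : zd j u = 0 := by
              simp only [hzd]
              rw [if_neg]
              rintro ⟨-, h⟩
              exact absurd heqc (ne_of_lt h)
            have : t * zy j u = t * zy (j + 1) u := by rw [hz1]
            rw [hz0, mul_zero, add_zero]
            linarith
          · have hz0 : zd j u = 0 := by
              simp only [hzd]
              rw [if_neg]
              rintro ⟨-, h⟩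
              exact absurd hgt (not_lt.mpr h.le)
            have hle := hεle _ (hF6 j hj u hu) (by linarith)
            rw [hz0, mul_zero, add_zero]
            linarith
        · -- 0 ≤ δ
          show 0 ≤ p.2.1 j u + t * zδ j u
          by_cases hgt : p.1 (j + 1) u < p.1 j u
          · have hz1 : zδ j u = zy j u - zy (j + 1) u := by
              simp only [hzδ]
              rw [if_pos ⟨⟨hj1, hu⟩, hgt⟩]
            have hle := hεle _ (hF3 j hj u hu) (by linarith)
            have : t * (zy j u - zy (j + 1) u) = t * zy j u - t * zy (j + 1) u := by
              ring
            rw [hz1]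
            linarith
          · have hz0 : zδ j u = 0 := by
              simp only [hzδ]
              rw [if_neg]
              rintro ⟨-, h⟩
              exact hgt h
            rw [hz0, mul_zero, add_zero]
            exact hδ0
        · -- 0 ≤ d
          show 0 ≤ p.2.2 j u + t * zd j u
          by_cases hlt : p.1 j u < p.1 (j + 1) u
          · have hz1 : zd j u = zy (j + 1) u - zy j u := by
              simp only [hzd]
              rw [if_pos ⟨⟨hj1, hu⟩, hlt⟩]
            have hle := hεle _ (hF4 j hj u hu) (by linarith)
            have : t * (zy (j + 1) u - zy j u) = t * zy (j + 1) u - t * zy j u := by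
              ring
            rw [hz1]
            linarith
          · have hz0 : zd j u = 0 := by
              simp only [hzd]
              rw [if_neg]
              rintro ⟨-, h⟩
              exact hlt h
            rw [hz0, mul_zero, add_zero]
            exact hd0
      · -- sum constraints
        intro j hj
        show ∑ u ∈ (G j).verts, (p.1 j u + t * zy j u) = ((G j).nu : ℝ)
        rw [Finset.sum_add_distrib, hsum j hj, ← Finset.mul_sum]
        have hzsum : ∑ u ∈ (G j).verts, zy j u = 0 := by
          refine MS_stage_sum_zero Vs Vt hdisj hj (hWF j hj) (hbip j hj) C hCfrac
            hCcl (Mf j hj) (hMf1 j hj) (hMf2 j hj) (hMf3 j hj) (zy j) ?_ ?_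
          · intro u hu
            simp [hzy, hu]
          · intro u hu
            simp [hzy, hu]
        rw [hzsum, mul_zero, add_zero]
      · -- embedding for y
        intro j u hnot
        show p.1 j u + t * zy j u = 0
        have hz0 : zy j u = 0 := by
          simp only [hzy]
          rw [if_neg]
          intro hCj
          exact hnot ⟨(hCfrac _ hCj).1, (hCfrac _ hCj).2.1⟩
        rw [hEmbY j u hnot, hz0, mul_zero, add_zero]
      · -- embedding for δ, d
        intro j u hnot
        obtain ⟨h1, h2⟩ := hEmbD j u hnot
        constructor
        · show p.2.1 j u + t * zδ j u = 0
          have hz0 : zδ j u = 0 := by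
            simp only [hzδ]
            rw [if_neg]
            rintro ⟨hc, -⟩
            exact hnot hc
          rw [h1, hz0, mul_zero, add_zero]
        · show p.2.2 j u + t * zd j u = 0
          have hz0 : zd j u = 0 := by
            simp only [hzd]
            rw [if_neg]
            rintro ⟨hc, -⟩
            exact hnot hc
          rw [h2, hz0, mul_zero, add_zero]
    -- derive the contradiction
    have habs1 : |ε / 2| ≤ ε / 2 := by
      rw [abs_of_pos (by positivity)]
    have habs2 : |-(ε / 2)| ≤ ε / 2 := by
      rw [abs_neg, abs_of_pos (by positivity)]
    have hzzero := MS_extreme_pert_zero hp zy zδ zd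
      (ne_of_gt (by positivity : (0:ℝ) < ε / 2))
      (hfeas (ε / 2) habs1) (hfeas (-(ε / 2)) habs2)
    have hCiv : (i, v) ∈ C := Relation.ReflTransGen.refl
    have := (hzzero i v).1
    simp only [hzy] at this
    rw [if_pos hCiv] at this
    split_ifs at this <;> norm_num at this
  ---------------------------------------------------------------
  -- STEP B : the deviation variables are integral
  ---------------------------------------------------------------
  have hδd : ∀ i v, IntegralReal (p.2.1 i v) ∧ IntegralReal (p.2.2 i v) := by
    intro i v
    by_cases hvalid : i + 1 < k ∧ v ∈ (G i).verts ∩ (G (i + 1)).verts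
    · obtain ⟨ha1, hb1, hδ0, hd0⟩ := hDk2 i hvalid.1 v hvalid.2
      -- δ equals max(y_i - y_{i+1}, 0)
      have hδub : p.2.1 i v ≤ max (p.1 i v - p.1 (i + 1) v) 0 := by
        by_contra hgt
        push_neg at hgt
        set ρ : ℝ := p.2.1 i v - max (p.1 i v - p.1 (i + 1) v) 0 with hρ
        have hρpos : 0 < ρ := by simp only [hρ]; linarith
        set z1 : ℕ → α → ℝ := fun j u => if j = i ∧ u = v then 1 else 0 with hz1
        have hfeas : ∀ t : ℝ, |t| ≤ ρ → MSpert p 0 z1 0 t ∈ regionPkEmb k G := by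
          intro t ht
          obtain ⟨htl, htr⟩ := abs_le.mp ht
          rw [MS_mem_regionPkEmb_iff]
          refine ⟨⟨?_, ?_⟩, ?_, ?_, ?_⟩
          · intro j hj
            refine ⟨fun u hu => ?_, fun e he => ?_⟩
            · show 0 ≤ p.1 j u + t * (0 : ℕ → α → ℝ) j u
              simpa using (hDk1 j hj).1 u hu
            · show 1 ≤ (p.1 j e.1 + t * (0 : ℕ → α → ℝ) j e.1) +
                (p.1 j e.2 + t * (0 : ℕ → α → ℝ) j e.2)
              simpa using (hDk1 j hj).2 e he
          · intro j hj1 u hu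
            obtain ⟨ha1', hb1', hδ0', hd0'⟩ := hDk2 j hj1 u hu
            by_cases hc : j = i ∧ u = v
            · obtain ⟨rfl, rfl⟩ := hc
              have hzv : z1 j u = 1 := by simp [hz1]
              refine ⟨?_, ?_, ?_, ?_⟩
              · show p.1 j u + t * (0:ℕ→α→ℝ) j u -
                  (p.1 (j+1) u + t * (0:ℕ→α→ℝ) (j+1) u) ≤ p.2.1 j u + t * z1 j u
                rw [hzv]
                have := le_max_left (p.1 j u - p.1 (j + 1) u) 0
                simp only [Pi.zero_apply, mul_zero, add_zero, mul_one]
                simp only [hρ] at htl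
                linarith
              · show p.1 (j+1) u + t * (0:ℕ→α→ℝ) (j+1) u -
                  (p.1 j u + t * (0:ℕ→α→ℝ) j u) ≤ p.2.2 j u + t * (0:ℕ→α→ℝ) j u
                simpa using hb1'
              · show 0 ≤ p.2.1 j u + t * z1 j u
                rw [hzv]
                have := le_max_right (p.1 j u - p.1 (j + 1) u) 0
                simp only [hρ] at htl
                linarith
              · show 0 ≤ p.2.2 j u + t * (0:ℕ→α→ℝ) j u
                simpa using hd0'
            · have hzv : z1 j u = 0 := by simp only [hz1]; rw [if_neg hc]
              refine ⟨?_, ?_, ?_, ?_⟩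
              · show p.1 j u + t * (0:ℕ→α→ℝ) j u -
                  (p.1 (j+1) u + t * (0:ℕ→α→ℝ) (j+1) u) ≤ p.2.1 j u + t * z1 j u
                rw [hzv]
                simpa using ha1'
              · show p.1 (j+1) u + t * (0:ℕ→α→ℝ) (j+1) u -
                  (p.1 j u + t * (0:ℕ→α→ℝ) j u) ≤ p.2.2 j u + t * (0:ℕ→α→ℝ) j u
                simpa using hb1'
              · show 0 ≤ p.2.1 j u + t * z1 j u
                rw [hzv]
                simpa using hδ0'
              · show 0 ≤ p.2.2 j u + t * (0:ℕ→α→ℝ) j u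
                simpa using hd0'
          · intro j hj
            show ∑ u ∈ (G j).verts, (p.1 j u + t * (0:ℕ→α→ℝ) j u) = ((G j).nu : ℝ)
            simpa using hsum j hj
          · intro j u hnot
            show p.1 j u + t * (0:ℕ→α→ℝ) j u = 0
            simpa using hEmbY j u hnot
          · intro j u hnot
            obtain ⟨h1, h2⟩ := hEmbD j u hnot
            constructor
            · show p.2.1 j u + t * z1 j u = 0
              have hzv : z1 j u = 0 := by
                simp only [hz1]
                rw [if_neg]
                rintro ⟨rfl, rfl⟩
                exact hnot hvalid
              rw [h1, hzv, mul_zero, add_zero]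
            · show p.2.2 j u + t * (0:ℕ→α→ℝ) j u = 0
              simpa using h2
        have habs1 : |ρ| ≤ ρ := by rw [abs_of_pos hρpos]
        have habs2 : |-ρ| ≤ ρ := by rw [abs_neg, abs_of_pos hρpos]
        have hzzero := MS_extreme_pert_zero hp 0 z1 0 (ne_of_gt hρpos)
          (hfeas ρ habs1) (hfeas (-ρ) habs2)
        have := (hzzero i v).2.1
        simp [hz1] at this
      have hδeq : p.2.1 i v = max (p.1 i v - p.1 (i + 1) v) 0 :=
        le_antisymm hδub (max_le (by linarith) hδ0)
      -- d equals max(y_{i+1} - y_i, 0)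
      have hdub : p.2.2 i v ≤ max (p.1 (i + 1) v - p.1 i v) 0 := by
        by_contra hgt
        push_neg at hgt
        set ρ : ℝ := p.2.2 i v - max (p.1 (i + 1) v - p.1 i v) 0 with hρ
        have hρpos : 0 < ρ := by simp only [hρ]; linarith
        set z1 : ℕ → α → ℝ := fun j u => if j = i ∧ u = v then 1 else 0 with hz1
        have hfeas : ∀ t : ℝ, |t| ≤ ρ → MSpert p 0 0 z1 t ∈ regionPkEmb k G := by
          intro t ht
          obtain ⟨htl, htr⟩ := abs_le.mp ht
          rw [MS_mem_regionPkEmb_iff]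
          refine ⟨⟨?_, ?_⟩, ?_, ?_, ?_⟩
          · intro j hj
            refine ⟨fun u hu => ?_, fun e he => ?_⟩
            · show 0 ≤ p.1 j u + t * (0 : ℕ → α → ℝ) j u
              simpa using (hDk1 j hj).1 u hu
            · show 1 ≤ (p.1 j e.1 + t * (0 : ℕ → α → ℝ) j e.1) +
                (p.1 j e.2 + t * (0 : ℕ → α → ℝ) j e.2)
              simpa using (hDk1 j hj).2 e he
          · intro j hj1 u hu
            obtain ⟨ha1', hb1', hδ0', hd0'⟩ := hDk2 j hj1 u hu
            by_cases hc : j = i ∧ u = v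
            · obtain ⟨rfl, rfl⟩ := hc
              have hzv : z1 j u = 1 := by simp [hz1]
              refine ⟨?_, ?_, ?_, ?_⟩
              · show p.1 j u + t * (0:ℕ→α→ℝ) j u -
                  (p.1 (j+1) u + t * (0:ℕ→α→ℝ) (j+1) u) ≤ p.2.1 j u + t * (0:ℕ→α→ℝ) j u
                simpa using ha1'
              · show p.1 (j+1) u + t * (0:ℕ→α→ℝ) (j+1) u -
                  (p.1 j u + t * (0:ℕ→α→ℝ) j u) ≤ p.2.2 j u + t * z1 j u
                rw [hzv]
                have := le_max_left (p.1 (j + 1) u - p.1 j u) 0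
                simp only [Pi.zero_apply, mul_zero, add_zero, mul_one]
                simp only [hρ] at htl
                linarith
              · show 0 ≤ p.2.1 j u + t * (0:ℕ→α→ℝ) j u
                simpa using hδ0'
              · show 0 ≤ p.2.2 j u + t * z1 j u
                rw [hzv]
                have := le_max_right (p.1 (j + 1) u - p.1 j u) 0
                simp only [hρ] at htl
                linarith
            · have hzv : z1 j u = 0 := by simp only [hz1]; rw [if_neg hc]
              refine ⟨?_, ?_, ?_, ?_⟩
              · show p.1 j u + t * (0:ℕ→α→ℝ) j u -
                  (p.1 (j+1) u + t * (0:ℕ→α→ℝ) (j+1) u) ≤ p.2.1 j u + t * (0:ℕ→α→ℝ) j u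
                simpa using ha1'
              · show p.1 (j+1) u + t * (0:ℕ→α→ℝ) (j+1) u -
                  (p.1 j u + t * (0:ℕ→α→ℝ) j u) ≤ p.2.2 j u + t * z1 j u
                rw [hzv]
                simpa using hb1'
              · show 0 ≤ p.2.1 j u + t * (0:ℕ→α→ℝ) j u
                simpa using hδ0'
              · show 0 ≤ p.2.2 j u + t * z1 j u
                rw [hzv]
                simpa using hd0'
          · intro j hj
            show ∑ u ∈ (G j).verts, (p.1 j u + t * (0:ℕ→α→ℝ) j u) = ((G j).nu : ℝ)
            simpa using hsum j hj
          · intro j u hnot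
            show p.1 j u + t * (0:ℕ→α→ℝ) j u = 0
            simpa using hEmbY j u hnot
          · intro j u hnot
            obtain ⟨h1, h2⟩ := hEmbD j u hnot
            constructor
            · show p.2.1 j u + t * (0:ℕ→α→ℝ) j u = 0
              simpa using h1
            · show p.2.2 j u + t * z1 j u = 0
              have hzv : z1 j u = 0 := by
                simp only [hz1]
                rw [if_neg]
                rintro ⟨rfl, rfl⟩
                exact hnot hvalid
              rw [h2, hzv, mul_zero, add_zero]
        have habs1 : |ρ| ≤ ρ := by rw [abs_of_pos hρpos]
        have habs2 : |-ρ| ≤ ρ := by rw [abs_neg, abs_of_pos hρpos]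
        have hzzero := MS_extreme_pert_zero hp 0 0 z1 (ne_of_gt hρpos)
          (hfeas ρ habs1) (hfeas (-ρ) habs2)
        have := (hzzero i v).2.2
        simp [hz1] at this
      have hdeq : p.2.2 i v = max (p.1 (i + 1) v - p.1 i v) 0 :=
        le_antisymm hdub (max_le (by linarith) hd0)
      obtain ⟨n1, hn1⟩ := hyInt i v
      obtain ⟨n2, hn2⟩ := hyInt (i + 1) v
      constructor
      · exact ⟨max (n1 - n2) 0, by rw [hδeq, hn1, hn2]; push_cast [Int.cast_max]; rfl⟩
      · exact ⟨max (n2 - n1) 0, by rw [hdeq, hn1, hn2]; push_cast [Int.cast_max]; rfl⟩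
    · obtain ⟨h1, h2⟩ := hEmbD i v hvalid
      exact ⟨h1 ▸ MS_integral_zero, h2 ▸ MS_integral_zero⟩
  exact ⟨hyInt, fun i v => (hδd i v).1, fun i v => (hδd i v).2⟩
end

section
/- Every extreme point of the polyhedron Q_k (the feasible region of the dual of the multistage auxiliary maximum flow LP) has all coordinates integral. -/
open FinGraph

variable {α : Type*}

/-- The multistage dual-flow polyhedron `Q_k`, embedded in the ambient product space by requiring
all variables to vanish outside their index sets (`y^i, γ^i ∈ ℝ^{V_i}` for `i < k`,
`δ^i, d^i ∈ ℝ^{V_i ∩ V_{i+1}}` for `i + 1 < k`). -/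
def regionQkEmb [DecidableEq α] (k : ℕ) (G : ℕ → FinGraph α) (Vs Vt : Finset α) :
    Set (MultiStagePt α × (ℕ → α → ℝ)) :=
  {q ∈ regionQk k G Vs Vt |
    (∀ i v, ¬(i < k ∧ v ∈ (G i).verts) → q.1.1 i v = 0 ∧ q.2 i v = 0) ∧
    (∀ i v, ¬(i + 1 < k ∧ v ∈ (G i).verts ∩ (G (i + 1)).verts) →
        q.1.2.1 i v = 0 ∧ q.1.2.2 i v = 0)}


open Finset in
lemma keyIneq (s Δ : ℝ) {ε m : ℝ} (b t : ℝ) (hs : 0 ≤ s) (h0 : s = 0 → Δ = 0) (hΔ : |Δ| ≤ 6)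
    (hm : 0 < s → m ≤ s) (hε : |ε| ≤ m / 6) (ht : t - b = s + ε * Δ) : b ≤ t := by
  rcases eq_or_lt_of_le hs with h | h
  · have := h0 h.symm; rw [this] at ht; linarith
  · have h6 : (0:ℝ) ≤ m / 6 := le_trans (abs_nonneg ε) hε
    have h1 : |ε * Δ| ≤ m := by
      rw [abs_mul]
      calc |ε| * |Δ| ≤ (m / 6) * 6 := mul_le_mul hε hΔ (abs_nonneg _) h6
        _ = m := by ring
    have h2 := neg_abs_le (ε * Δ)
    have h3 := hm h
    linarith

lemma extreme_dir {E : Type*} [AddCommGroup E] [Module ℝ E] {S : Set E} {q : E}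
    (hq : q ∈ Set.extremePoints ℝ S) {z : E} {ε : ℝ} (hε : 0 < ε)
    (h1 : q + ε • z ∈ S) (h2 : q + (-ε) • z ∈ S) : z = 0 := by
  have hseg : q ∈ openSegment ℝ (q + ε • z) (q + (-ε) • z) :=
    ⟨1/2, 1/2, one_half_pos, one_half_pos, by norm_num, by module⟩
  have h3 := (hq.2 h1 h2 hseg)
  have h4 : ε • z = 0 := add_eq_left.mp h3
  exact (smul_eq_zero.mp h4).resolve_left (ne_of_gt hε)

lemma mem_perturb [DecidableEq α] (k : ℕ) (G : ℕ → FinGraph α) (Vs Vt : Finset α)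
    (q z : MultiStagePt α × (ℕ → α → ℝ))
    (hq : q ∈ regionQkEmb k G Vs Vt)
    (hb : ∀ i v, |z.1.1 i v| ≤ 2 ∧ |z.1.2.1 i v| ≤ 2 ∧ |z.1.2.2 i v| ≤ 2 ∧ |z.2 i v| ≤ 2)
    (hC1 : ∀ i < k, ∀ v ∈ (G i).verts ∩ Vs,
      q.2 i v + q.1.1 i v - 1 = 0 → z.2 i v + z.1.1 i v = 0)
    (hC2 : ∀ i, i + 1 < k → ∀ v ∈ ((G i).verts ∩ (G (i+1)).verts) ∩ Vs,
      (q.2 i v - q.2 (i+1) v + q.1.2.1 i v = 0 → z.2 i v - z.2 (i+1) v + z.1.2.1 i v = 0) ∧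
      (q.2 (i+1) v - q.2 i v + q.1.2.2 i v = 0 → z.2 (i+1) v - z.2 i v + z.1.2.2 i v = 0))
    (hC3 : ∀ i < k, ∀ e ∈ (G i).edges, e.1 ∈ Vs → e.2 ∈ Vt →
      q.2 i e.2 - q.2 i e.1 = 0 → z.2 i e.2 - z.2 i e.1 = 0)
    (hC4 : ∀ i < k, ∀ v ∈ (G i).verts ∩ Vt,
      q.1.1 i v - q.2 i v = 0 → z.1.1 i v - z.2 i v = 0)
    (hC5 : ∀ i, i + 1 < k → ∀ v ∈ ((G i).verts ∩ (G (i+1)).verts) ∩ Vt,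
      (q.2 (i+1) v - q.2 i v + q.1.2.1 i v = 0 → z.2 (i+1) v - z.2 i v + z.1.2.1 i v = 0) ∧
      (q.2 i v - q.2 (i+1) v + q.1.2.2 i v = 0 → z.2 i v - z.2 (i+1) v + z.1.2.2 i v = 0))
    (hC6 : ∀ i < k, ∀ v ∈ (G i).verts, q.1.1 i v = 0 → z.1.1 i v = 0)
    (hC7 : ∀ i, i + 1 < k → ∀ v ∈ (G i).verts ∩ (G (i+1)).verts,
      (q.1.2.1 i v = 0 → z.1.2.1 i v = 0) ∧ (q.1.2.2 i v = 0 → z.1.2.2 i v = 0))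
    (hC8 : ∀ i v, ¬(i < k ∧ v ∈ (G i).verts) → z.1.1 i v = 0 ∧ z.2 i v = 0)
    (hC9 : ∀ i v, ¬(i + 1 < k ∧ v ∈ (G i).verts ∩ (G (i+1)).verts) →
      z.1.2.1 i v = 0 ∧ z.1.2.2 i v = 0) :
    ∃ ε₀ > 0, ∀ ε : ℝ, |ε| ≤ ε₀ → q + ε • z ∈ regionQkEmb k G Vs Vt := by
  classical
  obtain ⟨⟨h1, h2, h3, h4, h5, h6, h7⟩, hs1, hs2⟩ := hq
  set W : Finset α := (Finset.range k).biUnion (fun i => (G i).verts) with hW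
  set P : Finset (ℕ × α) := Finset.range k ×ˢ W with hP
  set A : Finset ℝ :=
    (P.image fun p => q.2 p.1 p.2 + q.1.1 p.1 p.2 - 1) ∪
    (P.image fun p => q.2 p.1 p.2 - q.2 (p.1+1) p.2 + q.1.2.1 p.1 p.2) ∪
    (P.image fun p => q.2 (p.1+1) p.2 - q.2 p.1 p.2 + q.1.2.1 p.1 p.2) ∪
    (P.image fun p => q.2 (p.1+1) p.2 - q.2 p.1 p.2 + q.1.2.2 p.1 p.2) ∪
    (P.image fun p => q.2 p.1 p.2 - q.2 (p.1+1) p.2 + q.1.2.2 p.1 p.2) ∪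
    (P.image fun p => q.1.1 p.1 p.2 - q.2 p.1 p.2) ∪
    (P.image fun p => q.1.1 p.1 p.2) ∪
    (P.image fun p => q.1.2.1 p.1 p.2) ∪
    (P.image fun p => q.1.2.2 p.1 p.2) ∪
    ((Finset.range k).biUnion fun i => (G i).edges.image fun e => q.2 i e.2 - q.2 i e.1) with hA
  set T : Finset ℝ := insert (1:ℝ) (A.filter fun s => 0 < s) with hT
  have hTne : T.Nonempty := ⟨1, Finset.mem_insert_self _ _⟩
  set m : ℝ := T.min' hTne with hm
  have hmpos : 0 < m := by
    have hmem : m ∈ T := T.min'_mem hTne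
    rw [hT, Finset.mem_insert] at hmem
    rcases hmem with h | h
    · rw [h]; norm_num
    · exact (Finset.mem_filter.mp h).2
  have hmle : ∀ s ∈ A, 0 < s → m ≤ s := fun s hs h =>
    Finset.min'_le _ _ (by rw [hT]; exact Finset.mem_insert_of_mem (Finset.mem_filter.mpr ⟨hs, h⟩))
  have hPmem : ∀ i, i < k → ∀ v ∈ (G i).verts, (i, v) ∈ P := fun i hi v hv =>
    Finset.mem_product.mpr ⟨Finset.mem_range.mpr hi,
      Finset.mem_biUnion.mpr ⟨i, Finset.mem_range.mpr hi, hv⟩⟩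
  have hmA1 : ∀ i, i < k → ∀ v ∈ (G i).verts,
      0 < q.2 i v + q.1.1 i v - 1 → m ≤ q.2 i v + q.1.1 i v - 1 := by
    intro i hi v hv h
    refine hmle _ ?_ h
    refine Finset.mem_union_left _ (Finset.mem_union_left _ (Finset.mem_union_left _
      (Finset.mem_union_left _ (Finset.mem_union_left _ (Finset.mem_union_left _
      (Finset.mem_union_left _ (Finset.mem_union_left _ (Finset.mem_union_left _ ?_))))))))
    exact Finset.mem_image.mpr ⟨(i, v), hPmem i hi v hv, rfl⟩
  have hmA2 : ∀ i, i < k → ∀ v ∈ (G i).verts,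
      0 < q.2 i v - q.2 (i+1) v + q.1.2.1 i v → m ≤ q.2 i v - q.2 (i+1) v + q.1.2.1 i v := by
    intro i hi v hv h
    refine hmle _ ?_ h
    refine Finset.mem_union_left _ (Finset.mem_union_left _ (Finset.mem_union_left _
      (Finset.mem_union_left _ (Finset.mem_union_left _ (Finset.mem_union_left _
      (Finset.mem_union_left _ (Finset.mem_union_left _ (Finset.mem_union_right _ ?_))))))))
    exact Finset.mem_image.mpr ⟨(i, v), hPmem i hi v hv, rfl⟩
  have hmA3 : ∀ i, i < k → ∀ v ∈ (G i).verts,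
      0 < q.2 (i+1) v - q.2 i v + q.1.2.1 i v → m ≤ q.2 (i+1) v - q.2 i v + q.1.2.1 i v := by
    intro i hi v hv h
    refine hmle _ ?_ h
    refine Finset.mem_union_left _ (Finset.mem_union_left _ (Finset.mem_union_left _
      (Finset.mem_union_left _ (Finset.mem_union_left _ (Finset.mem_union_left _
      (Finset.mem_union_left _ (Finset.mem_union_right _ ?_)))))))
    exact Finset.mem_image.mpr ⟨(i, v), hPmem i hi v hv, rfl⟩
  have hmA4 : ∀ i, i < k → ∀ v ∈ (G i).verts,
      0 < q.2 (i+1) v - q.2 i v + q.1.2.2 i v → m ≤ q.2 (i+1) v - q.2 i v + q.1.2.2 i v := by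
    intro i hi v hv h
    refine hmle _ ?_ h
    refine Finset.mem_union_left _ (Finset.mem_union_left _ (Finset.mem_union_left _
      (Finset.mem_union_left _ (Finset.mem_union_left _ (Finset.mem_union_left _
      (Finset.mem_union_right _ ?_))))))
    exact Finset.mem_image.mpr ⟨(i, v), hPmem i hi v hv, rfl⟩
  have hmA5 : ∀ i, i < k → ∀ v ∈ (G i).verts,
      0 < q.2 i v - q.2 (i+1) v + q.1.2.2 i v → m ≤ q.2 i v - q.2 (i+1) v + q.1.2.2 i v := by
    intro i hi v hv h
    refine hmle _ ?_ h
    refine Finset.mem_union_left _ (Finset.mem_union_left _ (Finset.mem_union_left _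
      (Finset.mem_union_left _ (Finset.mem_union_left _ (Finset.mem_union_right _ ?_)))))
    exact Finset.mem_image.mpr ⟨(i, v), hPmem i hi v hv, rfl⟩
  have hmA6 : ∀ i, i < k → ∀ v ∈ (G i).verts,
      0 < q.1.1 i v - q.2 i v → m ≤ q.1.1 i v - q.2 i v := by
    intro i hi v hv h
    refine hmle _ ?_ h
    refine Finset.mem_union_left _ (Finset.mem_union_left _ (Finset.mem_union_left _
      (Finset.mem_union_left _ (Finset.mem_union_right _ ?_))))
    exact Finset.mem_image.mpr ⟨(i, v), hPmem i hi v hv, rfl⟩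
  have hmA7 : ∀ i, i < k → ∀ v ∈ (G i).verts,
      0 < q.1.1 i v → m ≤ q.1.1 i v := by
    intro i hi v hv h
    refine hmle _ ?_ h
    refine Finset.mem_union_left _ (Finset.mem_union_left _ (Finset.mem_union_left _
      (Finset.mem_union_right _ ?_)))
    exact Finset.mem_image.mpr ⟨(i, v), hPmem i hi v hv, rfl⟩
  have hmA8 : ∀ i, i < k → ∀ v ∈ (G i).verts,
      0 < q.1.2.1 i v → m ≤ q.1.2.1 i v := by
    intro i hi v hv h
    refine hmle _ ?_ h
    refine Finset.mem_union_left _ (Finset.mem_union_left _ (Finset.mem_union_right _ ?_))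
    exact Finset.mem_image.mpr ⟨(i, v), hPmem i hi v hv, rfl⟩
  have hmA9 : ∀ i, i < k → ∀ v ∈ (G i).verts,
      0 < q.1.2.2 i v → m ≤ q.1.2.2 i v := by
    intro i hi v hv h
    refine hmle _ ?_ h
    refine Finset.mem_union_left _ (Finset.mem_union_right _ ?_)
    exact Finset.mem_image.mpr ⟨(i, v), hPmem i hi v hv, rfl⟩
  have hmA10 : ∀ i, i < k → ∀ e ∈ (G i).edges,
      0 < q.2 i e.2 - q.2 i e.1 → m ≤ q.2 i e.2 - q.2 i e.1 := by
    intro i hi e he h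
    refine hmle _ ?_ h
    refine Finset.mem_union_right _ ?_
    exact Finset.mem_biUnion.mpr ⟨i, Finset.mem_range.mpr hi,
      Finset.mem_image.mpr ⟨e, he, rfl⟩⟩
  refine ⟨m / 6, by positivity, fun ε hε => ?_⟩
  refine ⟨⟨?_, ?_, ?_, ?_, ?_, ?_, ?_⟩, ?_, ?_⟩
  · -- group 1
    intro i hi v hv
    have hv' := Finset.mem_inter.mp hv
    simp only [Prod.fst_add, Prod.snd_add, Prod.smul_fst, Prod.smul_snd, Pi.add_apply,
      Pi.smul_apply, smul_eq_mul]
    have hs0 : 0 ≤ q.2 i v + q.1.1 i v - 1 := by have := h1 i hi v hv; linarith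
    have habs : |z.2 i v + z.1.1 i v| ≤ 6 := by
      have b1 := (hb i v).1; have b4 := (hb i v).2.2.2
      exact (abs_add_le _ _).trans (by linarith)
    exact keyIneq _ _ _ _ hs0 (hC1 i hi v hv) habs (hmA1 i hi v hv'.1) hε (by ring)
  · -- group 2
    intro i hi v hv
    have hv' := Finset.mem_inter.mp (Finset.mem_inter.mp hv).1
    have hik : i < k := Nat.lt_of_succ_lt hi
    simp only [Prod.fst_add, Prod.snd_add, Prod.smul_fst, Prod.smul_snd, Pi.add_apply,
      Pi.smul_apply, smul_eq_mul]
    have hbd : ∀ a b c : ℝ, |a| ≤ 2 → |b| ≤ 2 → |c| ≤ 2 → |a - b + c| ≤ 6 := by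
      intro a b c ha hb' hc
      calc |a - b + c| ≤ |a - b| + |c| := abs_add_le _ _
        _ ≤ |a| + |b| + |c| := by linarith [abs_sub a b]
        _ ≤ 6 := by linarith
    constructor
    · have hs0 := (h2 i hi v hv).1
      have habs : |z.2 i v - z.2 (i+1) v + z.1.2.1 i v| ≤ 6 :=
        hbd _ _ _ (hb i v).2.2.2 (hb (i+1) v).2.2.2 (hb i v).2.1
      exact keyIneq _ _ _ _ hs0 (hC2 i hi v hv).1 habs (hmA2 i hik v hv'.1) hε (by ring)
    · have hs0 := (h2 i hi v hv).2
      have habs : |z.2 (i+1) v - z.2 i v + z.1.2.2 i v| ≤ 6 :=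
        hbd _ _ _ (hb (i+1) v).2.2.2 (hb i v).2.2.2 (hb i v).2.2.1
      exact keyIneq _ _ _ _ hs0 (hC2 i hi v hv).2 habs (hmA4 i hik v hv'.1) hε (by ring)
  · -- group 3 edges
    intro i hi e he he1 he2
    simp only [Prod.fst_add, Prod.snd_add, Prod.smul_fst, Prod.smul_snd, Pi.add_apply,
      Pi.smul_apply, smul_eq_mul]
    have hs0 := h3 i hi e he he1 he2
    have habs : |z.2 i e.2 - z.2 i e.1| ≤ 6 := by
      have b1 := (hb i e.2).2.2.2; have b2 := (hb i e.1).2.2.2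
      exact (abs_sub _ _).trans (by linarith)
    exact keyIneq _ _ _ _ hs0 (hC3 i hi e he he1 he2) habs (hmA10 i hi e he) hε (by ring)
  · -- group 4
    intro i hi v hv
    have hv' := Finset.mem_inter.mp hv
    simp only [Prod.fst_add, Prod.snd_add, Prod.smul_fst, Prod.smul_snd, Pi.add_apply,
      Pi.smul_apply, smul_eq_mul]
    have hs0 := h4 i hi v hv
    have habs : |z.1.1 i v - z.2 i v| ≤ 6 := by
      have b1 := (hb i v).1; have b2 := (hb i v).2.2.2
      exact (abs_sub _ _).trans (by linarith)
    exact keyIneq _ _ _ _ hs0 (hC4 i hi v hv) habs (hmA6 i hi v hv'.1) hε (by ring)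
  · -- group 5
    intro i hi v hv
    have hv' := Finset.mem_inter.mp (Finset.mem_inter.mp hv).1
    have hik : i < k := Nat.lt_of_succ_lt hi
    simp only [Prod.fst_add, Prod.snd_add, Prod.smul_fst, Prod.smul_snd, Pi.add_apply,
      Pi.smul_apply, smul_eq_mul]
    have hbd : ∀ a b c : ℝ, |a| ≤ 2 → |b| ≤ 2 → |c| ≤ 2 → |a - b + c| ≤ 6 := by
      intro a b c ha hb' hc
      calc |a - b + c| ≤ |a - b| + |c| := abs_add_le _ _
        _ ≤ |a| + |b| + |c| := by linarith [abs_sub a b]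
        _ ≤ 6 := by linarith
    constructor
    · have hs0 := (h5 i hi v hv).1
      have habs : |z.2 (i+1) v - z.2 i v + z.1.2.1 i v| ≤ 6 :=
        hbd _ _ _ (hb (i+1) v).2.2.2 (hb i v).2.2.2 (hb i v).2.1
      exact keyIneq _ _ _ _ hs0 (hC5 i hi v hv).1 habs (hmA3 i hik v hv'.1) hε (by ring)
    · have hs0 := (h5 i hi v hv).2
      have habs : |z.2 i v - z.2 (i+1) v + z.1.2.2 i v| ≤ 6 :=
        hbd _ _ _ (hb i v).2.2.2 (hb (i+1) v).2.2.2 (hb i v).2.2.1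
      exact keyIneq _ _ _ _ hs0 (hC5 i hi v hv).2 habs (hmA5 i hik v hv'.1) hε (by ring)
  · -- group 6: y ≥ 0
    intro i hi v hv
    simp only [Prod.fst_add, Prod.snd_add, Prod.smul_fst, Prod.smul_snd, Pi.add_apply,
      Pi.smul_apply, smul_eq_mul]
    have hs0 := h6 i hi v hv
    have habs : |z.1.1 i v| ≤ 6 := le_trans (hb i v).1 (by norm_num)
    exact keyIneq _ _ _ _ hs0 (hC6 i hi v hv) habs (hmA7 i hi v hv) hε (by ring)
  · -- group 7: δ, d ≥ 0
    intro i hi v hv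
    have hv' := Finset.mem_inter.mp hv
    have hik : i < k := Nat.lt_of_succ_lt hi
    simp only [Prod.fst_add, Prod.snd_add, Prod.smul_fst, Prod.smul_snd, Pi.add_apply,
      Pi.smul_apply, smul_eq_mul]
    constructor
    · have hs0 := (h7 i hi v hv).1
      have habs : |z.1.2.1 i v| ≤ 6 := le_trans (hb i v).2.1 (by norm_num)
      exact keyIneq _ _ _ _ hs0 (hC7 i hi v hv).1 habs (hmA8 i hik v hv'.1) hε (by ring)
    · have hs0 := (h7 i hi v hv).2
      have habs : |z.1.2.2 i v| ≤ 6 := le_trans (hb i v).2.2.1 (by norm_num)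
      exact keyIneq _ _ _ _ hs0 (hC7 i hi v hv).2 habs (hmA9 i hik v hv'.1) hε (by ring)
  · -- support 1
    intro i v h
    have hz := hC8 i v h
    have hqz := hs1 i v h
    constructor <;>
      simp only [Prod.fst_add, Prod.snd_add, Prod.smul_fst, Prod.smul_snd, Pi.add_apply,
        Pi.smul_apply, smul_eq_mul]
    · rw [hqz.1, hz.1]; ring
    · rw [hqz.2, hz.2]; ring
  · -- support 2
    intro i v h
    have hz := hC9 i v h
    have hqz := hs2 i v h
    constructor <;>
      simp only [Prod.fst_add, Prod.snd_add, Prod.smul_fst, Prod.smul_snd, Pi.add_apply,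
        Pi.smul_apply, smul_eq_mul]
    · rw [hqz.1, hz.1]; ring
    · rw [hqz.2, hz.2]; ring
lemma extreme_contra [DecidableEq α] (k : ℕ) (G : ℕ → FinGraph α) (Vs Vt : Finset α)
    (q : MultiStagePt α × (ℕ → α → ℝ))
    (hq : q ∈ Set.extremePoints ℝ (regionQkEmb k G Vs Vt))
    (z : MultiStagePt α × (ℕ → α → ℝ))
    (hb : ∀ i v, |z.1.1 i v| ≤ 2 ∧ |z.1.2.1 i v| ≤ 2 ∧ |z.1.2.2 i v| ≤ 2 ∧ |z.2 i v| ≤ 2)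
    (hC1 : ∀ i < k, ∀ v ∈ (G i).verts ∩ Vs,
      q.2 i v + q.1.1 i v - 1 = 0 → z.2 i v + z.1.1 i v = 0)
    (hC2 : ∀ i, i + 1 < k → ∀ v ∈ ((G i).verts ∩ (G (i+1)).verts) ∩ Vs,
      (q.2 i v - q.2 (i+1) v + q.1.2.1 i v = 0 → z.2 i v - z.2 (i+1) v + z.1.2.1 i v = 0) ∧
      (q.2 (i+1) v - q.2 i v + q.1.2.2 i v = 0 → z.2 (i+1) v - z.2 i v + z.1.2.2 i v = 0))
    (hC3 : ∀ i < k, ∀ e ∈ (G i).edges, e.1 ∈ Vs → e.2 ∈ Vt →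
      q.2 i e.2 - q.2 i e.1 = 0 → z.2 i e.2 - z.2 i e.1 = 0)
    (hC4 : ∀ i < k, ∀ v ∈ (G i).verts ∩ Vt,
      q.1.1 i v - q.2 i v = 0 → z.1.1 i v - z.2 i v = 0)
    (hC5 : ∀ i, i + 1 < k → ∀ v ∈ ((G i).verts ∩ (G (i+1)).verts) ∩ Vt,
      (q.2 (i+1) v - q.2 i v + q.1.2.1 i v = 0 → z.2 (i+1) v - z.2 i v + z.1.2.1 i v = 0) ∧
      (q.2 i v - q.2 (i+1) v + q.1.2.2 i v = 0 → z.2 i v - z.2 (i+1) v + z.1.2.2 i v = 0))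
    (hC6 : ∀ i < k, ∀ v ∈ (G i).verts, q.1.1 i v = 0 → z.1.1 i v = 0)
    (hC7 : ∀ i, i + 1 < k → ∀ v ∈ (G i).verts ∩ (G (i+1)).verts,
      (q.1.2.1 i v = 0 → z.1.2.1 i v = 0) ∧ (q.1.2.2 i v = 0 → z.1.2.2 i v = 0))
    (hC8 : ∀ i v, ¬(i < k ∧ v ∈ (G i).verts) → z.1.1 i v = 0 ∧ z.2 i v = 0)
    (hC9 : ∀ i v, ¬(i + 1 < k ∧ v ∈ (G i).verts ∩ (G (i+1)).verts) →
      z.1.2.1 i v = 0 ∧ z.1.2.2 i v = 0) :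
    z = 0 := by
  obtain ⟨ε₀, hε₀, hmem⟩ :=
    mem_perturb k G Vs Vt q z hq.1 hb hC1 hC2 hC3 hC4 hC5 hC6 hC7 hC8 hC9
  exact extreme_dir hq hε₀ (hmem ε₀ (le_of_eq (abs_of_pos hε₀)))
    (hmem (-ε₀) (by rw [abs_neg]; exact le_of_eq (abs_of_pos hε₀)))

open Classical in
/-- Direction on the `γ` variables: indicator of the value `x₀`. -/
noncomputable def zG (q : MultiStagePt α × (ℕ → α → ℝ)) (x₀ : ℝ) : ℕ → α → ℝ :=
  fun i v => if q.2 i v = x₀ then 1 else 0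

open Classical in
noncomputable def zY [DecidableEq α] (k : ℕ) (G : ℕ → FinGraph α) (Vs Vt : Finset α)
    (q : MultiStagePt α × (ℕ → α → ℝ)) (x₀ : ℝ) : ℕ → α → ℝ :=
  fun i v => if i < k ∧ v ∈ (G i).verts then
    (if v ∈ Vs ∧ q.2 i v + q.1.1 i v - 1 = 0 then -(zG q x₀ i v)
     else if v ∈ Vt ∧ q.1.1 i v - q.2 i v = 0 then zG q x₀ i v else 0)
  else 0

open Classical in
noncomputable def zD1 [DecidableEq α] (k : ℕ) (G : ℕ → FinGraph α) (Vs Vt : Finset α)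
    (q : MultiStagePt α × (ℕ → α → ℝ)) (x₀ : ℝ) : ℕ → α → ℝ :=
  fun i v => if i + 1 < k ∧ v ∈ (G i).verts ∩ (G (i+1)).verts then
    (if v ∈ Vs ∧ q.2 i v - q.2 (i+1) v + q.1.2.1 i v = 0 then zG q x₀ (i+1) v - zG q x₀ i v
     else if v ∈ Vt ∧ q.2 (i+1) v - q.2 i v + q.1.2.1 i v = 0 then zG q x₀ i v - zG q x₀ (i+1) v
     else 0)
  else 0

open Classical in
noncomputable def zD2 [DecidableEq α] (k : ℕ) (G : ℕ → FinGraph α) (Vs Vt : Finset α)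
    (q : MultiStagePt α × (ℕ → α → ℝ)) (x₀ : ℝ) : ℕ → α → ℝ :=
  fun i v => if i + 1 < k ∧ v ∈ (G i).verts ∩ (G (i+1)).verts then
    (if v ∈ Vs ∧ q.2 (i+1) v - q.2 i v + q.1.2.2 i v = 0 then zG q x₀ i v - zG q x₀ (i+1) v
     else if v ∈ Vt ∧ q.2 i v - q.2 (i+1) v + q.1.2.2 i v = 0 then zG q x₀ (i+1) v - zG q x₀ i v
     else 0)
  else 0

open Classical in
/-- Single-coordinate direction. -/
noncomputable def zInd [DecidableEq α] (i₀ : ℕ) (v₀ : α) : ℕ → α → ℝ :=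
  fun i v => if i = i₀ ∧ v = v₀ then 1 else 0
lemma gamma_integral [DecidableEq α] (k : ℕ) (G : ℕ → FinGraph α) (Vs Vt : Finset α)
    (hdisj : Disjoint Vs Vt)
    (q : MultiStagePt α × (ℕ → α → ℝ))
    (hq : q ∈ Set.extremePoints ℝ (regionQkEmb k G Vs Vt)) :
    ∀ i v, IntegralReal (q.2 i v) := by
  classical
  obtain ⟨-, hs1, hs2⟩ := hq.1
  intro i₀ v₀
  by_contra hfrac
  have hx0ne : ∀ n : ℤ, q.2 i₀ v₀ ≠ (n : ℝ) := fun n h => hfrac ⟨n, h⟩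
  have hγ01 : ∀ i v, zG q (q.2 i₀ v₀) i v = 0 ∨ zG q (q.2 i₀ v₀) i v = 1 := by
    intro i v; unfold zG; split_ifs <;> simp
  have habs1 : ∀ i v, |zG q (q.2 i₀ v₀) i v| ≤ 1 := by
    intro i v; rcases hγ01 i v with h | h <;> rw [h] <;> norm_num
  have hγeq : ∀ i j v w, q.2 i v = q.2 j w → zG q (q.2 i₀ v₀) i v = zG q (q.2 i₀ v₀) j w := by
    intro i j v w h; unfold zG; rw [h]
  have hγz : ∀ i v, q.2 i v = 0 → zG q (q.2 i₀ v₀) i v = 0 := by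
    intro i v h; unfold zG
    rw [if_neg]; intro hc; exact hx0ne 0 (by rw [← hc, h]; norm_num)
  have hγo : ∀ i v, q.2 i v = 1 → zG q (q.2 i₀ v₀) i v = 0 := by
    intro i v h; unfold zG
    rw [if_neg]; intro hc; exact hx0ne 1 (by rw [← hc, h]; norm_num)
  have key2 : ∀ a b : ℝ, |a| ≤ 1 → |b| ≤ 1 → |a - b| ≤ 2 := fun a b ha hb =>
    (abs_sub a b).trans (by linarith)
  have hzero : ((zY k G Vs Vt q (q.2 i₀ v₀),
      zD1 k G Vs Vt q (q.2 i₀ v₀), zD2 k G Vs Vt q (q.2 i₀ v₀)), zG q (q.2 i₀ v₀)) = 0 := by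
    refine extreme_contra k G Vs Vt q hq _ ?_ ?_ ?_ ?_ ?_ ?_ ?_ ?_ ?_ ?_
    · -- bounds
      intro i v
      refine ⟨?_, ?_, ?_, ?_⟩
      · dsimp only; unfold zY
        split_ifs <;>
          first
            | (rw [abs_neg]; linarith [habs1 i v])
            | linarith [habs1 i v]
            | norm_num
      · dsimp only; unfold zD1
        split_ifs <;>
          first
            | exact key2 _ _ (habs1 _ _) (habs1 _ _)
            | norm_num
      · dsimp only; unfold zD2
        split_ifs <;>
          first
            | exact key2 _ _ (habs1 _ _) (habs1 _ _)
            | norm_num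
      · dsimp only; linarith [habs1 i v]
    · -- C1
      intro i hi v hv ht
      have hv' := Finset.mem_inter.mp hv
      dsimp only; unfold zY
      rw [if_pos ⟨hi, hv'.1⟩, if_pos ⟨hv'.2, ht⟩]; ring
    · -- C2
      intro i hi v hv
      have hv'' := Finset.mem_inter.mp hv
      have hv' := Finset.mem_inter.mp hv''.1
      constructor
      · intro ht
        dsimp only; unfold zD1
        rw [if_pos ⟨hi, hv''.1⟩, if_pos ⟨hv''.2, ht⟩]; ring
      · intro ht
        dsimp only; unfold zD2
        rw [if_pos ⟨hi, hv''.1⟩, if_pos ⟨hv''.2, ht⟩]; ring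
    · -- C3
      intro i hi e he he1 he2 ht
      dsimp only
      rw [hγeq i i e.2 e.1 (by linarith)]; ring
    · -- C4
      intro i hi v hv ht
      have hv' := Finset.mem_inter.mp hv
      have hnvs : v ∉ Vs := Finset.disjoint_right.mp hdisj hv'.2
      dsimp only; unfold zY
      rw [if_pos ⟨hi, hv'.1⟩, if_neg (fun hc => hnvs hc.1), if_pos ⟨hv'.2, ht⟩]; ring
    · -- C5
      intro i hi v hv
      have hv'' := Finset.mem_inter.mp hv
      have hnvs : v ∉ Vs := Finset.disjoint_right.mp hdisj hv''.2
      constructor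
      · intro ht
        dsimp only; unfold zD1
        rw [if_pos ⟨hi, hv''.1⟩, if_neg (fun hc => hnvs hc.1), if_pos ⟨hv''.2, ht⟩]; ring
      · intro ht
        dsimp only; unfold zD2
        rw [if_pos ⟨hi, hv''.1⟩, if_neg (fun hc => hnvs hc.1), if_pos ⟨hv''.2, ht⟩]; ring
    · -- C6
      intro i hi v hv hy0
      dsimp only; unfold zY
      rw [if_pos ⟨hi, hv⟩]
      split_ifs with hA hE
      · rw [hγo i v (by linarith [hA.2])]; ring
      · rw [hγz i v (by linarith [hE.2])]
      · rfl
    · -- C7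
      intro i hi v hv
      constructor
      · intro hδ0
        dsimp only; unfold zD1
        rw [if_pos ⟨hi, hv⟩]
        split_ifs with hB hF
        · rw [hγeq (i+1) i v v (by linarith [hB.2])]; ring
        · rw [hγeq i (i+1) v v (by linarith [hF.2])]; ring
        · rfl
      · intro hδ0
        dsimp only; unfold zD2
        rw [if_pos ⟨hi, hv⟩]
        split_ifs with hB hF
        · rw [hγeq i (i+1) v v (by linarith [hB.2])]; ring
        · rw [hγeq (i+1) i v v (by linarith [hF.2])]; ring
        · rfl
    · -- C8
      intro i v h
      constructor
      · dsimp only; unfold zY; rw [if_neg h]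
      · dsimp only; exact hγz i v (hs1 i v h).2
    · -- C9
      intro i v h
      constructor
      · dsimp only; unfold zD1; rw [if_neg h]
      · dsimp only; unfold zD2; rw [if_neg h]
  have h2 := congrFun (congrFun (congrArg Prod.snd hzero) i₀) v₀
  simp only [zG, if_pos rfl, Prod.snd_zero, Pi.zero_apply] at h2
  exact one_ne_zero h2
lemma y_integral [DecidableEq α] (k : ℕ) (G : ℕ → FinGraph α) (Vs Vt : Finset α)
    (hdisj : Disjoint Vs Vt) (hbip : ∀ i < k, (G i).Bipartition Vs Vt)
    (q : MultiStagePt α × (ℕ → α → ℝ))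
    (hq : q ∈ Set.extremePoints ℝ (regionQkEmb k G Vs Vt)) :
    ∀ i v, IntegralReal (q.1.1 i v) := by
  classical
  have hγ := gamma_integral k G Vs Vt hdisj q hq
  obtain ⟨-, hs1, hs2⟩ := hq.1
  intro i v
  by_cases hsup : i < k ∧ v ∈ (G i).verts
  swap
  · exact ⟨0, by rw [(hs1 i v hsup).1]; norm_num⟩
  obtain ⟨hi, hv⟩ := hsup
  rcases Finset.mem_union.mp ((hbip i hi).1 hv) with hvs | hvt
  · -- v ∈ Vs
    by_cases ht : q.2 i v + q.1.1 i v - 1 = 0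
    · obtain ⟨n, hn⟩ := hγ i v
      exact ⟨1 - n, by push_cast; linarith⟩
    by_cases hy0 : q.1.1 i v = 0
    · exact ⟨0, by rw [hy0]; norm_num⟩
    exfalso
    have hzero : ((zInd i v, (0:ℕ→α→ℝ), (0:ℕ→α→ℝ)), (0:ℕ→α→ℝ))
        = (0 : MultiStagePt α × (ℕ → α → ℝ)) := by
      refine extreme_contra k G Vs Vt q hq _ ?_ ?_ ?_ ?_ ?_ ?_ ?_ ?_ ?_ ?_
      · intro i' v'
        refine ⟨?_, by simp, by simp, by simp⟩
        dsimp only; unfold zInd; split_ifs <;> norm_num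
      · intro i' hi' v' hv' ht'
        dsimp only; unfold zInd
        simp only [Pi.zero_apply, zero_add]
        split_ifs with h
        · obtain ⟨rfl, rfl⟩ := h; exact absurd ht' ht
        · rfl
      · intro i' hi' v' hv'
        exact ⟨fun _ => by simp, fun _ => by simp⟩
      · intro i' hi' e he he1 he2 ht'; simp
      · intro i' hi' v' hv' ht'
        have hv'' := Finset.mem_inter.mp hv'
        dsimp only; unfold zInd
        simp only [Pi.zero_apply, sub_zero]
        split_ifs with h
        · obtain ⟨rfl, rfl⟩ := h; exact absurd hv''.2 (Finset.disjoint_left.mp hdisj hvs)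
        · rfl
      · intro i' hi' v' hv'
        exact ⟨fun _ => by simp, fun _ => by simp⟩
      · intro i' hi' v' hv' h0
        dsimp only; unfold zInd
        split_ifs with h
        · obtain ⟨rfl, rfl⟩ := h; exact absurd h0 hy0
        · rfl
      · intro i' hi' v' hv'
        exact ⟨fun _ => by simp, fun _ => by simp⟩
      · intro i' v' h
        refine ⟨?_, by simp⟩
        dsimp only; unfold zInd
        split_ifs with h'
        · obtain ⟨rfl, rfl⟩ := h'; exact absurd ⟨hi, hv⟩ h
        · rfl
      · intro i' v' h
        exact ⟨by simp, by simp⟩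
    have h2 := congrFun (congrFun (congrArg (fun p => p.1.1) hzero) i) v
    simp [zInd] at h2
  · -- v ∈ Vt
    by_cases ht : q.1.1 i v - q.2 i v = 0
    · obtain ⟨n, hn⟩ := hγ i v
      exact ⟨n, by linarith⟩
    by_cases hy0 : q.1.1 i v = 0
    · exact ⟨0, by rw [hy0]; norm_num⟩
    exfalso
    have hzero : ((zInd i v, (0:ℕ→α→ℝ), (0:ℕ→α→ℝ)), (0:ℕ→α→ℝ))
        = (0 : MultiStagePt α × (ℕ → α → ℝ)) := by
      refine extreme_contra k G Vs Vt q hq _ ?_ ?_ ?_ ?_ ?_ ?_ ?_ ?_ ?_ ?_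
      · intro i' v'
        refine ⟨?_, by simp, by simp, by simp⟩
        dsimp only; unfold zInd; split_ifs <;> norm_num
      · intro i' hi' v' hv' ht'
        have hv'' := Finset.mem_inter.mp hv'
        dsimp only; unfold zInd
        simp only [Pi.zero_apply, zero_add]
        split_ifs with h
        · obtain ⟨rfl, rfl⟩ := h; exact absurd hvt (Finset.disjoint_left.mp hdisj hv''.2)
        · rfl
      · intro i' hi' v' hv'
        exact ⟨fun _ => by simp, fun _ => by simp⟩
      · intro i' hi' e he he1 he2 ht'; simp
      · intro i' hi' v' hv' ht'
        dsimp only; unfold zInd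
        simp only [Pi.zero_apply, sub_zero]
        split_ifs with h
        · obtain ⟨rfl, rfl⟩ := h; exact absurd ht' ht
        · rfl
      · intro i' hi' v' hv'
        exact ⟨fun _ => by simp, fun _ => by simp⟩
      · intro i' hi' v' hv' h0
        dsimp only; unfold zInd
        split_ifs with h
        · obtain ⟨rfl, rfl⟩ := h; exact absurd h0 hy0
        · rfl
      · intro i' hi' v' hv'
        exact ⟨fun _ => by simp, fun _ => by simp⟩
      · intro i' v' h
        refine ⟨?_, by simp⟩
        dsimp only; unfold zInd
        split_ifs with h'
        · obtain ⟨rfl, rfl⟩ := h'; exact absurd ⟨hi, hv⟩ h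
        · rfl
      · intro i' v' h
        exact ⟨by simp, by simp⟩
    have h2 := congrFun (congrFun (congrArg (fun p => p.1.1) hzero) i) v
    simp [zInd] at h2
lemma delta_integral [DecidableEq α] (k : ℕ) (G : ℕ → FinGraph α) (Vs Vt : Finset α)
    (hdisj : Disjoint Vs Vt) (hbip : ∀ i < k, (G i).Bipartition Vs Vt)
    (q : MultiStagePt α × (ℕ → α → ℝ))
    (hq : q ∈ Set.extremePoints ℝ (regionQkEmb k G Vs Vt)) :
    ∀ i v, IntegralReal (q.1.2.1 i v) := by
  classical
  have hγ := gamma_integral k G Vs Vt hdisj q hq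
  obtain ⟨-, hs1, hs2⟩ := hq.1
  intro i v
  by_cases hsup : i + 1 < k ∧ v ∈ (G i).verts ∩ (G (i+1)).verts
  swap
  · exact ⟨0, by rw [(hs2 i v hsup).1]; norm_num⟩
  obtain ⟨hi, hv⟩ := hsup
  have hv' := Finset.mem_inter.mp hv
  have hik : i < k := Nat.lt_of_succ_lt hi
  by_cases h0 : q.1.2.1 i v = 0
  · exact ⟨0, by rw [h0]; norm_num⟩
  rcases Finset.mem_union.mp ((hbip i hik).1 hv'.1) with hvs | hvt
  · -- v ∈ Vs
    by_cases ht : q.2 i v - q.2 (i+1) v + q.1.2.1 i v = 0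
    · obtain ⟨n1, hn1⟩ := hγ i v
      obtain ⟨n2, hn2⟩ := hγ (i+1) v
      exact ⟨n2 - n1, by push_cast; linarith⟩
    exfalso
    have hzero : (((0:ℕ→α→ℝ), zInd i v, (0:ℕ→α→ℝ)), (0:ℕ→α→ℝ))
        = (0 : MultiStagePt α × (ℕ → α → ℝ)) := by
      refine extreme_contra k G Vs Vt q hq _ ?_ ?_ ?_ ?_ ?_ ?_ ?_ ?_ ?_ ?_
      · intro i' v'
        refine ⟨by simp, ?_, by simp, by simp⟩
        dsimp only; unfold zInd; split_ifs <;> norm_num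
      · intro i' hi' v' hv' ht'; simp
      · intro i' hi' v' hv'
        refine ⟨?_, fun _ => by simp⟩
        intro ht'
        dsimp only; unfold zInd
        simp only [Pi.zero_apply]
        split_ifs with h
        · obtain ⟨rfl, rfl⟩ := h; exact absurd ht' ht
        · norm_num
      · intro i' hi' e he he1 he2 ht'; simp
      · intro i' hi' v' hv' ht'; simp
      · intro i' hi' v' hv'
        refine ⟨?_, fun _ => by simp⟩
        intro ht'
        have hv'' := Finset.mem_inter.mp hv'
        dsimp only; unfold zInd
        simp only [Pi.zero_apply]
        split_ifs with h
        · obtain ⟨rfl, rfl⟩ := h; exact absurd hvs (Finset.disjoint_right.mp hdisj hv''.2)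
        · norm_num
      · intro i' hi' v' hv' hy0; simp
      · intro i' hi' v' hv'
        refine ⟨?_, fun _ => by simp⟩
        intro hd0
        dsimp only; unfold zInd
        split_ifs with h
        · obtain ⟨rfl, rfl⟩ := h; exact absurd hd0 h0
        · rfl
      · intro i' v' h; exact ⟨by simp, by simp⟩
      · intro i' v' h
        refine ⟨?_, by simp⟩
        dsimp only; unfold zInd
        split_ifs with h'
        · obtain ⟨rfl, rfl⟩ := h'; exact absurd ⟨hi, hv⟩ h
        · rfl
    have h2 := congrFun (congrFun (congrArg (fun p => p.1.2.1) hzero) i) v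
    simp [zInd] at h2
  · -- v ∈ Vt
    by_cases ht : q.2 (i+1) v - q.2 i v + q.1.2.1 i v = 0
    · obtain ⟨n1, hn1⟩ := hγ i v
      obtain ⟨n2, hn2⟩ := hγ (i+1) v
      exact ⟨n1 - n2, by push_cast; linarith⟩
    exfalso
    have hzero : (((0:ℕ→α→ℝ), zInd i v, (0:ℕ→α→ℝ)), (0:ℕ→α→ℝ))
        = (0 : MultiStagePt α × (ℕ → α → ℝ)) := by
      refine extreme_contra k G Vs Vt q hq _ ?_ ?_ ?_ ?_ ?_ ?_ ?_ ?_ ?_ ?_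
      · intro i' v'
        refine ⟨by simp, ?_, by simp, by simp⟩
        dsimp only; unfold zInd; split_ifs <;> norm_num
      · intro i' hi' v' hv' ht'; simp
      · intro i' hi' v' hv'
        refine ⟨?_, fun _ => by simp⟩
        intro ht'
        have hv'' := Finset.mem_inter.mp hv'
        dsimp only; unfold zInd
        simp only [Pi.zero_apply]
        split_ifs with h
        · obtain ⟨rfl, rfl⟩ := h; exact absurd hvt (Finset.disjoint_left.mp hdisj hv''.2)
        · norm_num
      · intro i' hi' e he he1 he2 ht'; simp
      · intro i' hi' v' hv' ht'; simp
      · intro i' hi' v' hv'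
        refine ⟨?_, fun _ => by simp⟩
        intro ht'
        dsimp only; unfold zInd
        simp only [Pi.zero_apply]
        split_ifs with h
        · obtain ⟨rfl, rfl⟩ := h; exact absurd ht' ht
        · norm_num
      · intro i' hi' v' hv' hy0; simp
      · intro i' hi' v' hv'
        refine ⟨?_, fun _ => by simp⟩
        intro hd0
        dsimp only; unfold zInd
        split_ifs with h
        · obtain ⟨rfl, rfl⟩ := h; exact absurd hd0 h0
        · rfl
      · intro i' v' h; exact ⟨by simp, by simp⟩
      · intro i' v' h
        refine ⟨?_, by simp⟩
        dsimp only; unfold zInd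
        split_ifs with h'
        · obtain ⟨rfl, rfl⟩ := h'; exact absurd ⟨hi, hv⟩ h
        · rfl
    have h2 := congrFun (congrFun (congrArg (fun p => p.1.2.1) hzero) i) v
    simp [zInd] at h2

lemma d_integral [DecidableEq α] (k : ℕ) (G : ℕ → FinGraph α) (Vs Vt : Finset α)
    (hdisj : Disjoint Vs Vt) (hbip : ∀ i < k, (G i).Bipartition Vs Vt)
    (q : MultiStagePt α × (ℕ → α → ℝ))
    (hq : q ∈ Set.extremePoints ℝ (regionQkEmb k G Vs Vt)) :
    ∀ i v, IntegralReal (q.1.2.2 i v) := by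
  classical
  have hγ := gamma_integral k G Vs Vt hdisj q hq
  obtain ⟨-, hs1, hs2⟩ := hq.1
  intro i v
  by_cases hsup : i + 1 < k ∧ v ∈ (G i).verts ∩ (G (i+1)).verts
  swap
  · exact ⟨0, by rw [(hs2 i v hsup).2]; norm_num⟩
  obtain ⟨hi, hv⟩ := hsup
  have hv' := Finset.mem_inter.mp hv
  have hik : i < k := Nat.lt_of_succ_lt hi
  by_cases h0 : q.1.2.2 i v = 0
  · exact ⟨0, by rw [h0]; norm_num⟩
  rcases Finset.mem_union.mp ((hbip i hik).1 hv'.1) with hvs | hvt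
  · -- v ∈ Vs
    by_cases ht : q.2 (i+1) v - q.2 i v + q.1.2.2 i v = 0
    · obtain ⟨n1, hn1⟩ := hγ i v
      obtain ⟨n2, hn2⟩ := hγ (i+1) v
      exact ⟨n1 - n2, by push_cast; linarith⟩
    exfalso
    have hzero : (((0:ℕ→α→ℝ), (0:ℕ→α→ℝ), zInd i v), (0:ℕ→α→ℝ))
        = (0 : MultiStagePt α × (ℕ → α → ℝ)) := by
      refine extreme_contra k G Vs Vt q hq _ ?_ ?_ ?_ ?_ ?_ ?_ ?_ ?_ ?_ ?_
      · intro i' v'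
        refine ⟨by simp, by simp, ?_, by simp⟩
        dsimp only; unfold zInd; split_ifs <;> norm_num
      · intro i' hi' v' hv' ht'; simp
      · intro i' hi' v' hv'
        refine ⟨fun _ => by simp, ?_⟩
        intro ht'
        dsimp only; unfold zInd
        simp only [Pi.zero_apply]
        split_ifs with h
        · obtain ⟨rfl, rfl⟩ := h; exact absurd ht' ht
        · norm_num
      · intro i' hi' e he he1 he2 ht'; simp
      · intro i' hi' v' hv' ht'; simp
      · intro i' hi' v' hv'
        refine ⟨fun _ => by simp, ?_⟩
        intro ht'
        have hv'' := Finset.mem_inter.mp hv'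
        dsimp only; unfold zInd
        simp only [Pi.zero_apply]
        split_ifs with h
        · obtain ⟨rfl, rfl⟩ := h; exact absurd hvs (Finset.disjoint_right.mp hdisj hv''.2)
        · norm_num
      · intro i' hi' v' hv' hy0; simp
      · intro i' hi' v' hv'
        refine ⟨fun _ => by simp, ?_⟩
        intro hd0
        dsimp only; unfold zInd
        split_ifs with h
        · obtain ⟨rfl, rfl⟩ := h; exact absurd hd0 h0
        · rfl
      · intro i' v' h; exact ⟨by simp, by simp⟩
      · intro i' v' h
        refine ⟨by simp, ?_⟩
        dsimp only; unfold zInd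
        split_ifs with h'
        · obtain ⟨rfl, rfl⟩ := h'; exact absurd ⟨hi, hv⟩ h
        · rfl
    have h2 := congrFun (congrFun (congrArg (fun p => p.1.2.2) hzero) i) v
    simp [zInd] at h2
  · -- v ∈ Vt
    by_cases ht : q.2 i v - q.2 (i+1) v + q.1.2.2 i v = 0
    · obtain ⟨n1, hn1⟩ := hγ i v
      obtain ⟨n2, hn2⟩ := hγ (i+1) v
      exact ⟨n2 - n1, by push_cast; linarith⟩
    exfalso
    have hzero : (((0:ℕ→α→ℝ), (0:ℕ→α→ℝ), zInd i v), (0:ℕ→α→ℝ))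
        = (0 : MultiStagePt α × (ℕ → α → ℝ)) := by
      refine extreme_contra k G Vs Vt q hq _ ?_ ?_ ?_ ?_ ?_ ?_ ?_ ?_ ?_ ?_
      · intro i' v'
        refine ⟨by simp, by simp, ?_, by simp⟩
        dsimp only; unfold zInd; split_ifs <;> norm_num
      · intro i' hi' v' hv' ht'; simp
      · intro i' hi' v' hv'
        refine ⟨fun _ => by simp, ?_⟩
        intro ht'
        have hv'' := Finset.mem_inter.mp hv'
        dsimp only; unfold zInd
        simp only [Pi.zero_apply]
        split_ifs with h
        · obtain ⟨rfl, rfl⟩ := h; exact absurd hvt (Finset.disjoint_left.mp hdisj hv''.2)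
        · norm_num
      · intro i' hi' e he he1 he2 ht'; simp
      · intro i' hi' v' hv' ht'; simp
      · intro i' hi' v' hv'
        refine ⟨fun _ => by simp, ?_⟩
        intro ht'
        dsimp only; unfold zInd
        simp only [Pi.zero_apply]
        split_ifs with h
        · obtain ⟨rfl, rfl⟩ := h; exact absurd ht' ht
        · norm_num
      · intro i' hi' v' hv' hy0; simp
      · intro i' hi' v' hv'
        refine ⟨fun _ => by simp, ?_⟩
        intro hd0
        dsimp only; unfold zInd
        split_ifs with h
        · obtain ⟨rfl, rfl⟩ := h; exact absurd hd0 h0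
        · rfl
      · intro i' v' h; exact ⟨by simp, by simp⟩
      · intro i' v' h
        refine ⟨by simp, ?_⟩
        dsimp only; unfold zInd
        split_ifs with h'
        · obtain ⟨rfl, rfl⟩ := h'; exact absurd ⟨hi, hv⟩ h
        · rfl
    have h2 := congrFun (congrFun (congrArg (fun p => p.1.2.2) hzero) i) v
    simp [zInd] at h2

/-- Every extreme point of the polyhedron `Q_k` (the feasible region of the
dual of the multistage auxiliary maximum flow LP) has all coordinates integral. -/
theorem extremePoints_regionQk_integral [DecidableEq α]
    (k : ℕ) (hk : 1 ≤ k) (G : ℕ → FinGraph α) (Vs Vt : Finset α)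
    (hdisj : Disjoint Vs Vt)
    (hWF : ∀ i < k, (G i).WF) (hbip : ∀ i < k, (G i).Bipartition Vs Vt)
    (q : MultiStagePt α × (ℕ → α → ℝ))
    (hq : q ∈ Set.extremePoints ℝ (regionQkEmb k G Vs Vt)) :
    (∀ i v, IntegralReal (q.1.1 i v)) ∧ (∀ i v, IntegralReal (q.1.2.1 i v)) ∧
    (∀ i v, IntegralReal (q.1.2.2 i v)) ∧ (∀ i v, IntegralReal (q.2 i v)) := by
  exact ⟨y_integral k G Vs Vt hdisj hbip q hq, delta_integral k G Vs Vt hdisj hbip q hq,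
    d_integral k G Vs Vt hdisj hbip q hq, gamma_integral k G Vs Vt hdisj q hq⟩
end

section
/- Every feasible solution of the relaxed multistage region D_k extends to a feasible solution of the multistage dual-flow polyhedron Q_k: if ((y^i), (δ^i), (d^i)) ∈ D_k and one defines γ^i_v = 1 − y^i_v for v ∈ V_i∩V_s and γ^i_v = y^i_v for v ∈ V_i∩V_t, then ((y^i), (δ^i), (d^i), (γ^i)) ∈ Q_k. -/
open FinGraph

variable {α : Type*}

/-- Every feasible solution of the relaxed multistage region `D_k` extends to a
feasible solution of the multistage dual-flow polyhedron `Q_k`, setting `γ^i_v = 1 - y^i_v` on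
`V_s` and `γ^i_v = y^i_v` on `V_t` (note `V_s` and `V_t` are disjoint). -/
theorem regionDk_extends_to_regionQk [DecidableEq α]
    (k : ℕ) (hk : 1 ≤ k) (G : ℕ → FinGraph α) (Vs Vt : Finset α)
    (hdisj : Disjoint Vs Vt)
    (hWF : ∀ i < k, (G i).WF) (hbip : ∀ i < k, (G i).Bipartition Vs Vt)
    (p : MultiStagePt α) (hp : p ∈ regionDk k G) :
    (p, fun i v => if v ∈ Vs then 1 - p.1 i v else p.1 i v) ∈ regionQk k G Vs Vt := by
  obtain ⟨h1, h2⟩ := hp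
  refine ⟨?_, ?_, ?_, ?_, ?_, ?_, ?_⟩
  · intro i hi v hv
    simp only [Finset.mem_inter] at hv
    simp [hv.2]
  · intro i hi v hv
    simp only [Finset.mem_inter] at hv
    have := h2 i hi v (Finset.mem_inter.mpr hv.1)
    simp only [hv.2, if_pos]
    constructor <;> linarith [this.1, this.2.1]
  · intro i hi e he h1e h2e
    have hne : e.2 ∉ Vs := fun h => (Finset.disjoint_left.mp hdisj h) h2e
    have := (h1 i hi).2 e he
    simp only [h1e, if_pos, hne, if_neg, not_false_iff]
    linarith
  · intro i hi v hv
    simp only [Finset.mem_inter] at hv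
    have hne : v ∉ Vs := fun h => (Finset.disjoint_left.mp hdisj h) hv.2
    simp [hne]
  · intro i hi v hv
    simp only [Finset.mem_inter] at hv
    have hne : v ∉ Vs := fun h => (Finset.disjoint_left.mp hdisj h) hv.2
    have := h2 i hi v (Finset.mem_inter.mpr hv.1)
    simp only [hne, if_neg, not_false_iff]
    constructor <;> linarith [this.1, this.2.1]
  · intro i hi v hv
    exact (h1 i hi).1 v hv
  · intro i hi v hv
    have := h2 i hi v hv
    exact ⟨this.2.2.1, this.2.2.2⟩
end

section
/- For every linear objective c with nonnegative coefficients on all of the variables (y^i), (δ^i), (d^i) (and not involving the γ variables), and every point ((y^i), (δ^i), (d^i), (γ^i)) ∈ Q_k, there exists a point μ' ∈ D_k with c(μ') ≤ c((y^i), (δ^i), (d^i)). -/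
open FinGraph

variable {α : Type*}

lemma max_sub_max_le {a b c : ℝ} (h : a - b ≤ c) (hc : 0 ≤ c) :
    max 0 a - max 0 b ≤ c := by
  rcases le_total a 0 with ha | ha
  · rw [max_eq_left ha]
    have := le_max_left (0:ℝ) b
    linarith
  · rw [max_eq_right ha]
    have := le_max_right (0:ℝ) b
    linarith

/-- For every linear objective `c` with nonnegative coefficients on the
variables `(y^i, δ^i, d^i)` (and not involving the `γ` variables), every point of the multistage
dual-flow polyhedron `Q_k` is dominated by a point of `D_k`: there is `μ' ∈ D_k` whose objective
value is at most that of the `(y^i, δ^i, d^i)`-part of the given point of `Q_k`. -/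
theorem regionQk_dominated_by_regionDk [DecidableEq α]
    (k : ℕ) (hk : 1 ≤ k) (G : ℕ → FinGraph α) (Vs Vt : Finset α)
    (hdisj : Disjoint Vs Vt)
    (hWF : ∀ i < k, (G i).WF) (hbip : ∀ i < k, (G i).Bipartition Vs Vt)
    (cy cδ cd : ℕ → α → ℝ)
    (hcy : ∀ i < k, ∀ v ∈ (G i).verts, 0 ≤ cy i v)
    (hcδ : ∀ i, i + 1 < k → ∀ v ∈ (G i).verts ∩ (G (i + 1)).verts, 0 ≤ cδ i v)
    (hcd : ∀ i, i + 1 < k → ∀ v ∈ (G i).verts ∩ (G (i + 1)).verts, 0 ≤ cd i v)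
    (q : MultiStagePt α × (ℕ → α → ℝ)) (hq : q ∈ regionQk k G Vs Vt) :
    ∃ p ∈ regionDk k G, objCk k G cy cδ cd p ≤ objCk k G cy cδ cd q.1 := by
  obtain ⟨h1, h2, h3, h4, h5, h6, h7⟩ := hq
  set y := q.1.1 with hy
  set δ := q.1.2.1
  set d := q.1.2.2
  set γ := q.2
  -- the new allocation
  set y' : ℕ → α → ℝ := fun i v =>
    if v ∈ Vs then max 0 (1 - γ i v) else if v ∈ Vt then max 0 (γ i v) else 0 with hy'
  have hVsVt : ∀ v ∈ Vs, v ∉ Vt := fun v hv => Finset.disjoint_left.mp hdisj hv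
  -- y' ≤ y on vertices
  have hle : ∀ i < k, ∀ v ∈ (G i).verts, y' i v ≤ y i v := by
    intro i hi v hv
    have hv' : v ∈ Vs ∪ Vt := (hbip i hi).1 hv
    have hy0 : 0 ≤ y i v := h6 i hi v hv
    rcases Finset.mem_union.mp hv' with hvs | hvt
    · have := h1 i hi v (Finset.mem_inter.mpr ⟨hv, hvs⟩)
      simp only [hy', hvs, if_pos]
      exact max_le hy0 (by linarith)
    · have hns : v ∉ Vs := fun h => hVsVt v h hvt
      have := h4 i hi v (Finset.mem_inter.mpr ⟨hv, hvt⟩)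
      simp only [hy', hns, if_neg, hvt, if_pos, if_false]
      exact max_le hy0 (by linarith)
  refine ⟨(y', δ, d), ⟨?_, ?_⟩, ?_⟩
  · intro i hi
    constructor
    · intro v hv
      simp only [hy']
      split_ifs <;> simp [le_max_left]
    · intro e he
      obtain ⟨h1s, h2t⟩ := (hbip i hi).2 e he
      have h2ns : e.2 ∉ Vs := fun h => hVsVt e.2 h h2t
      have hγ := h3 i hi e he h1s h2t
      simp only [hy', if_pos h1s, if_neg h2ns, if_pos h2t]
      have a1 := le_max_right (0:ℝ) (1 - γ i e.1)
      have a2 := le_max_right (0:ℝ) (γ i e.2)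
      linarith
  · intro i hi v hv
    have hik : i < k := Nat.lt_of_succ_lt hi
    have ⟨hδ0, hd0⟩ := h7 i hi v hv
    refine ⟨?_, ?_, hδ0, hd0⟩
    · -- y' i v - y' (i+1) v ≤ δ i v
      have hv' : v ∈ Vs ∪ Vt := (hbip i hik).1 (Finset.mem_inter.mp hv).1
      rcases Finset.mem_union.mp hv' with hvs | hvt
      · have := (h2 i hi v (Finset.mem_inter.mpr ⟨hv, hvs⟩)).1
        simp only [hy', hvs, if_pos]
        exact max_sub_max_le (by linarith) hδ0
      · have hns : v ∉ Vs := fun h => hVsVt v h hvt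
        have := (h5 i hi v (Finset.mem_inter.mpr ⟨hv, hvt⟩)).1
        simp only [hy', hns, if_neg, hvt, if_pos, if_false]
        exact max_sub_max_le (by linarith) hδ0
    · have hv' : v ∈ Vs ∪ Vt := (hbip i hik).1 (Finset.mem_inter.mp hv).1
      rcases Finset.mem_union.mp hv' with hvs | hvt
      · have := (h2 i hi v (Finset.mem_inter.mpr ⟨hv, hvs⟩)).2
        simp only [hy', hvs, if_pos]
        exact max_sub_max_le (by linarith) hd0
      · have hns : v ∉ Vs := fun h => hVsVt v h hvt
        have := (h5 i hi v (Finset.mem_inter.mpr ⟨hv, hvt⟩)).2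
        simp only [hy', hns, if_neg, hvt, if_pos, if_false]
        exact max_sub_max_le (by linarith) hd0
  · unfold objCk
    simp only
    gcongr with i hi v hv
    · exact hcy i (Finset.mem_range.mp hi) v hv
    · exact hle i (Finset.mem_range.mp hi) v hv
end
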